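/- Fix n ≥ 0. Let R = ℤ[b_0^{±1}, b_1^{±1}, …, λ_1, λ_2, …] be the Laurent polynomial ring over ℤ in the indeterminates b_i (i ≥ 0), with further polynomial indeterminates λ_i (i ≥ 1), and let μ_m ∈ R (m ∈ ℤ) be the Schröder-path moments of (b, λ). Then the (n+1)×(n+1) Toeplitz matrix (μ_{i−j})_{0≤i,j≤n} has SSNF diag(1, −λ_1/b_1, λ_1λ_2/(b_1b_2), …, (−1)^n λ_1λ_2⋯λ_n/(b_1b_2⋯b_n)) over R. -/

import Mathlib

/-- The finite set of lattice paths of `t` steps (each step `+1`, `0` or `-1`) from height `0`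
to height `0` staying at or above the `x`-axis, recorded by their height sequences. -/
def motzkinPaths (t : ℕ) : Finset (Fin (t+1) → ℕ) :=
  (Fintype.piFinset fun _ : Fin (t+1) => Finset.range (t+1)).filter
    (fun ω => ω 0 = 0 ∧ ω (Fin.last t) = 0 ∧
      ∀ i : Fin t, ω i.succ ≤ ω i.castSucc + 1 ∧ ω i.castSucc ≤ ω i.succ + 1)

/-- The `n`-th (positive) Schröder moment: a Schröder path of size `n` is such a path with
(number of level steps) + (number of up steps) = `n` (level steps have length 1, up and down
steps length 1/2); the weight of a level step at height `k` is `binv k = b_k⁻¹` and of a down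
step from height `k` is `lam k * binv (k-1) * binv k`. -/
def schroderMomentPos {R : Type*} [CommRing R] (binv lam : ℕ → R) (n : ℕ) : R :=
  ∑ t ∈ Finset.range (2 * n + 1),
    ∑ ω ∈ (motzkinPaths t).filter (fun ω =>
        (Finset.univ.filter (fun i : Fin t => ω i.succ = ω i.castSucc)).card +
        (Finset.univ.filter (fun i : Fin t => ω i.succ = ω i.castSucc + 1)).card = n),
      ∏ i : Fin t,
        if ω i.succ = ω i.castSucc then binv (ω i.castSucc)
        else if ω i.succ + 1 = ω i.castSucc then
          lam (ω i.castSucc) * binv (ω i.castSucc - 1) * binv (ω i.castSucc)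
        else 1

/-- The `(-n)`-th Schröder moment (`n ≥ 1`): the sum is over Schröder paths of size `n` whose
first step is a level (east) step, a level step at height `k` now weighing `b k` and a down
step from height `k` weighing `lam k`. -/
def schroderMomentNeg {R : Type*} [CommRing R] (b lam : ℕ → R) (n : ℕ) : R :=
  ∑ t ∈ Finset.range (2 * n + 1),
    ∑ ω ∈ (motzkinPaths t).filter (fun ω =>
        ((Finset.univ.filter (fun i : Fin t => ω i.succ = ω i.castSucc)).card +
         (Finset.univ.filter (fun i : Fin t => ω i.succ = ω i.castSucc + 1)).card = n) ∧
        0 < t ∧ ∀ i : Fin (t+1), (i : ℕ) = 1 → ω i = 0),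
      ∏ i : Fin t,
        if ω i.succ = ω i.castSucc then b (ω i.castSucc)
        else if ω i.succ + 1 = ω i.castSucc then lam (ω i.castSucc)
        else 1

/-- The Schröder-path moments `μ_m` for `m : ℤ`. -/
def schroderMoment {R : Type*} [CommRing R] (b binv lam : ℕ → R) (m : ℤ) : R :=
  if 0 ≤ m then schroderMomentPos binv lam m.toNat else schroderMomentNeg b lam (-m).toNat

/-- `A` has special Smith normal form `diag d` over `R`: `P * A * Q = diagonal d` for some
`P, Q` of determinant `1`, and `d j ∣ d i` whenever `j ≤ i`. -/
def HasSSNF {R : Type*} [CommRing R] {n : ℕ} (A : Matrix (Fin n) (Fin n) R) (d : Fin n → R) :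
    Prop :=
  (∃ P Q : Matrix (Fin n) (Fin n) R, P.det = 1 ∧ Q.det = 1 ∧ P * A * Q = Matrix.diagonal d) ∧
  ∀ i j : Fin n, j ≤ i → d j ∣ d i

namespace TSSNF
open Matrix


def pathsTo (t h : ℕ) : Finset (Fin (t+1) → ℕ) :=
  (Fintype.piFinset fun _ : Fin (t+1) => Finset.range (t+1)).filter
    (fun ω => ω 0 = 0 ∧ ω (Fin.last t) = h ∧
      ∀ i : Fin t, ω i.succ ≤ ω i.castSucc + 1 ∧ ω i.castSucc ≤ ω i.succ + 1)

def psize {t : ℕ} (ω : Fin (t+1) → ℕ) : ℕ :=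
  (Finset.univ.filter (fun i : Fin t => ω i.succ = ω i.castSucc)).card +
  (Finset.univ.filter (fun i : Fin t => ω i.succ = ω i.castSucc + 1)).card

variable {R : Type*} [CommRing R]

def wprod (lev dwn : ℕ → R) {t : ℕ} (ω : Fin (t+1) → ℕ) : R :=
  ∏ i : Fin t,
    if ω i.succ = ω i.castSucc then lev (ω i.castSucc)
    else if ω i.succ + 1 = ω i.castSucc then dwn (ω i.castSucc)
    else 1

lemma height_le {t : ℕ} (ω : Fin (t+1) → ℕ) (h0 : ω 0 = 0)
    (hstep : ∀ i : Fin t, ω i.succ ≤ ω i.castSucc + 1) : ∀ i : Fin (t+1), (ω i : ℕ) ≤ i := by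
  intro i
  induction i using Fin.induction with
  | zero => simp [h0]
  | succ j ih =>
      have := hstep j
      have h2 : (j.castSucc : ℕ) = (j : ℕ) := rfl
      have h3 : ((j.succ : Fin (t+1)) : ℕ) = (j : ℕ) + 1 := rfl
      omega

lemma mem_pathsTo {t h : ℕ} (ω : Fin (t+1) → ℕ) :
    ω ∈ pathsTo t h ↔ (ω 0 = 0 ∧ ω (Fin.last t) = h ∧
      ∀ i : Fin t, ω i.succ ≤ ω i.castSucc + 1 ∧ ω i.castSucc ≤ ω i.succ + 1) := by
  unfold pathsTo
  rw [Finset.mem_filter]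
  constructor
  · rintro ⟨-, h⟩; exact h
  · intro h
    refine ⟨?_, h⟩
    rw [Fintype.mem_piFinset]
    intro i
    rw [Finset.mem_range]
    have := height_le ω h.1 (fun i => (h.2.2 i).1) i
    have := i.isLt
    omega

lemma psize_decomp {t : ℕ} (ω : Fin (t+2) → ℕ) :
    psize ω = psize (Fin.init ω)
      + ((if ω (Fin.last t).succ = ω (Fin.last t).castSucc then 1 else 0)
        + (if ω (Fin.last t).succ = ω (Fin.last t).castSucc + 1 then 1 else 0)) := by
  unfold psize
  rw [Finset.card_filter, Finset.card_filter, Finset.card_filter, Finset.card_filter,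
    Fin.sum_univ_castSucc (f := fun i : Fin (t+1) => if ω i.succ = ω i.castSucc then (1:ℕ) else 0),
    Fin.sum_univ_castSucc (f := fun i : Fin (t+1) => if ω i.succ = ω i.castSucc + 1 then (1:ℕ) else 0)]
  have h1 : ∀ i : Fin t, (if ω (i.castSucc).succ = ω (i.castSucc).castSucc then (1:ℕ) else 0)
      = if Fin.init ω i.succ = Fin.init ω i.castSucc then 1 else 0 := by
    intro i
    simp only [Fin.succ_castSucc, Fin.init]
    rfl
  have h2 : ∀ i : Fin t, (if ω (i.castSucc).succ = ω (i.castSucc).castSucc + 1 then (1:ℕ) else 0)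
      = if Fin.init ω i.succ = Fin.init ω i.castSucc + 1 then 1 else 0 := by
    intro i
    simp only [Fin.succ_castSucc, Fin.init]
    rfl
  rw [Finset.sum_congr rfl (fun i _ => h1 i), Finset.sum_congr rfl (fun i _ => h2 i)]
  ring

lemma wprod_decomp (lev dwn : ℕ → R) {t : ℕ} (ω : Fin (t+2) → ℕ) :
    wprod lev dwn ω = wprod lev dwn (Fin.init ω) *
      (if ω (Fin.last t).succ = ω (Fin.last t).castSucc then lev (ω (Fin.last t).castSucc)
       else if ω (Fin.last t).succ + 1 = ω (Fin.last t).castSucc then dwn (ω (Fin.last t).castSucc)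
       else 1) := by
  unfold wprod
  rw [Fin.prod_univ_castSucc]
  congr 1

lemma init_mem {t h p : ℕ} {ω : Fin (t+2) → ℕ} (hω : ω ∈ pathsTo (t+1) h)
    (hp : ω (Fin.last t).castSucc = p) : Fin.init ω ∈ pathsTo t p := by
  rw [mem_pathsTo] at hω ⊢
  obtain ⟨h0, hl, hstep⟩ := hω
  refine ⟨?_, hp, ?_⟩
  · show ω (Fin.castSucc 0) = 0
    rw [Fin.castSucc_zero]; exact h0
  · intro i
    have := hstep i.castSucc
    simp only [Fin.succ_castSucc] at this
    exact this

lemma snoc_mem {t h p : ℕ} {ω' : Fin (t+1) → ℕ} (hω : ω' ∈ pathsTo t p)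
    (hadj : p ≤ h + 1 ∧ h ≤ p + 1) : (Fin.snoc ω' h : Fin (t+2) → ℕ) ∈ pathsTo (t+1) h := by
  rw [mem_pathsTo] at hω ⊢
  obtain ⟨h0, hl, hstep⟩ := hω
  refine ⟨?_, ?_, ?_⟩
  · have hz : (0 : Fin (t+2)) = Fin.castSucc (0 : Fin (t+1)) := rfl
    rw [hz, Fin.snoc_castSucc]; exact h0
  · simp [Fin.snoc_last]
  · intro i
    induction i using Fin.lastCases with
    | last =>
        rw [Fin.succ_last, Fin.snoc_last, Fin.snoc_castSucc]
        rw [hl]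
        exact ⟨hadj.2, hadj.1⟩
    | cast j =>
        rw [Fin.succ_castSucc, Fin.snoc_castSucc, Fin.snoc_castSucc]
        exact hstep j



variable {R : Type*} [CommRing R]

lemma peel_master (lev dwn : ℕ → R) (t h p s : ℕ) (hadj : p ≤ h + 1 ∧ h ≤ p + 1) :
    ∑ ω ∈ (pathsTo (t+1) h).filter
        (fun ω => psize ω = s ∧ ω (Fin.last t).castSucc = p), wprod lev dwn ω
    = (if h = p then lev p else if h = p + 1 then 1 else dwn p) *
      ∑ ω' ∈ (pathsTo t p).filter
        (fun ω' => psize ω' + (if p = h + 1 then 0 else 1) = s), wprod lev dwn ω' := by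
  rw [Finset.mul_sum]
  refine Finset.sum_nbij' (fun ω => Fin.init ω) (fun ω' => Fin.snoc ω' h) ?_ ?_ ?_ ?_ ?_
  · -- forward membership
    intro ω hω
    rw [Finset.mem_filter] at hω ⊢
    obtain ⟨hmem, hsz, hpen⟩ := hω
    refine ⟨init_mem hmem hpen, ?_⟩
    show psize (Fin.init ω) + (if p = h + 1 then 0 else 1) = s
    have hd := psize_decomp ω
    have hlast : ω (Fin.last t).succ = h := by
      rw [Fin.succ_last]
      exact ((mem_pathsTo ω).1 hmem).2.1
    rw [hlast, hpen] at hd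
    by_cases hph : p = h + 1
    · rw [if_pos hph]
      have h1 : ¬ (h = p) := by omega
      have h2 : ¬ (h = p + 1) := by omega
      rw [if_neg h1, if_neg h2] at hd
      omega
    · rw [if_neg hph]
      have : h = p ∨ h = p + 1 := by omega
      rcases this with h1 | h1
      · rw [if_pos h1] at hd
        have h2 : ¬ (h = p + 1) := by omega
        rw [if_neg h2] at hd
        omega
      · have h2 : ¬ (h = p) := by omega
        rw [if_neg h2, if_pos h1] at hd
        omega
  · -- backward membership
    intro ω' hω'
    rw [Finset.mem_filter] at hω' ⊢
    obtain ⟨hmem, hsz⟩ := hω'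
    have hpl : (Fin.snoc ω' h : Fin (t+2) → ℕ) (Fin.last t).castSucc = p := by
      rw [Fin.snoc_castSucc]
      exact ((mem_pathsTo ω').1 hmem).2.1
    refine ⟨snoc_mem hmem hadj, ?_, hpl⟩
    show psize (Fin.snoc ω' h : Fin (t+2) → ℕ) = s
    have hd := psize_decomp (Fin.snoc ω' h : Fin (t+2) → ℕ)
    have hlast : (Fin.snoc ω' h : Fin (t+2) → ℕ) (Fin.last t).succ = h := by
      rw [Fin.succ_last, Fin.snoc_last]
    rw [hlast, hpl, Fin.init_snoc] at hd
    by_cases hph : p = h + 1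
    · rw [if_pos hph] at hsz
      have h1 : ¬ (h = p) := by omega
      have h2 : ¬ (h = p + 1) := by omega
      rw [if_neg h1, if_neg h2] at hd
      omega
    · rw [if_neg hph] at hsz
      have : h = p ∨ h = p + 1 := by omega
      rcases this with h1 | h1
      · rw [if_pos h1] at hd
        have h2 : ¬ (h = p + 1) := by omega
        rw [if_neg h2] at hd
        omega
      · have h2 : ¬ (h = p) := by omega
        rw [if_neg h2, if_pos h1] at hd
        omega
  · -- left inverse
    intro ω hω
    rw [Finset.mem_filter] at hω
    have hlast : ω (Fin.last (t+1)) = h := ((mem_pathsTo ω).1 hω.1).2.1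
    rw [← hlast]
    exact Fin.snoc_init_self ω
  · -- right inverse
    intro ω' _
    exact Fin.init_snoc (n := t+1) (α := fun _ => ℕ) (x := h) (p := ω')
  · -- weights
    intro ω hω
    rw [Finset.mem_filter] at hω
    obtain ⟨hmem, hsz, hpen⟩ := hω
    have hd := wprod_decomp lev dwn ω
    have hlast : ω (Fin.last t).succ = h := by
      rw [Fin.succ_last]
      exact ((mem_pathsTo ω).1 hmem).2.1
    rw [hlast, hpen] at hd
    rw [hd]
    rw [mul_comm]
    congr 1
    by_cases h1 : h = p
    · rw [if_pos h1, if_pos h1]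
    · rw [if_neg h1, if_neg h1]
      by_cases h2 : h = p + 1
      · have h3 : ¬ (h + 1 = p) := by omega
        rw [if_neg h3, if_pos h2]
      · have h3 : h + 1 = p := by
          have := hadj.1; have := hadj.2; omega
        rw [if_pos h3, if_neg h2]



def WS' (lev dwn : ℕ → R) (t s h : ℕ) : R :=
  ∑ ω ∈ (pathsTo t h).filter (fun ω => psize ω = s), wprod lev dwn ω

lemma WS_split (lev dwn : ℕ → R) (t s h : ℕ) :
    WS' lev dwn (t+1) s h =
      (∑ ω ∈ (pathsTo (t+1) h).filter
          (fun ω => psize ω = s ∧ ω (Fin.last t).castSucc = h), wprod lev dwn ω)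
      + (if h = 0 then 0 else ∑ ω ∈ (pathsTo (t+1) h).filter
          (fun ω => psize ω = s ∧ ω (Fin.last t).castSucc = h - 1), wprod lev dwn ω)
      + (∑ ω ∈ (pathsTo (t+1) h).filter
          (fun ω => psize ω = s ∧ ω (Fin.last t).castSucc = h + 1), wprod lev dwn ω) := by
  classical
  have hpen : ∀ ω ∈ (pathsTo (t+1) h), ω (Fin.last t).castSucc ≤ h + 1 ∧
      h ≤ ω (Fin.last t).castSucc + 1 := by
    intro ω hω
    rw [mem_pathsTo] at hω
    have := hω.2.2 (Fin.last t)
    have hl : ω (Fin.last t).succ = h := by rw [Fin.succ_last]; exact hω.2.1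
    omega
  unfold WS'
  rw [← Finset.sum_filter_add_sum_filter_not
    ((pathsTo (t+1) h).filter (fun ω => psize ω = s))
    (fun ω => ω (Fin.last t).castSucc = h)]
  rw [← Finset.sum_filter_add_sum_filter_not
    (((pathsTo (t+1) h).filter (fun ω => psize ω = s)).filter
      (fun ω => ¬ ω (Fin.last t).castSucc = h))
    (fun ω => ω (Fin.last t).castSucc = h + 1)]
  have e1 : ((pathsTo (t+1) h).filter (fun ω => psize ω = s)).filter
      (fun ω => ω (Fin.last t).castSucc = h)
      = (pathsTo (t+1) h).filter (fun ω => psize ω = s ∧ ω (Fin.last t).castSucc = h) := by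
    rw [Finset.filter_filter]
  have e2 : (((pathsTo (t+1) h).filter (fun ω => psize ω = s)).filter
      (fun ω => ¬ ω (Fin.last t).castSucc = h)).filter
      (fun ω => ω (Fin.last t).castSucc = h + 1)
      = (pathsTo (t+1) h).filter (fun ω => psize ω = s ∧ ω (Fin.last t).castSucc = h + 1) := by
    rw [Finset.filter_filter, Finset.filter_filter]
    apply Finset.filter_congr
    intro ω hω
    constructor
    · rintro ⟨h1, -, h3⟩; exact ⟨h1, h3⟩
    · rintro ⟨h1, h3⟩; exact ⟨h1, by omega, h3⟩
  have e3 : (((pathsTo (t+1) h).filter (fun ω => psize ω = s)).filter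
      (fun ω => ¬ ω (Fin.last t).castSucc = h)).filter
      (fun ω => ¬ ω (Fin.last t).castSucc = h + 1)
      = if h = 0 then ∅ else
        (pathsTo (t+1) h).filter (fun ω => psize ω = s ∧ ω (Fin.last t).castSucc = h - 1) := by
    rw [Finset.filter_filter, Finset.filter_filter]
    by_cases h0 : h = 0
    · rw [if_pos h0]
      apply Finset.filter_false_of_mem
      intro ω hω
      have := hpen ω hω
      rintro ⟨-, h2, h3⟩
      omega
    · rw [if_neg h0]
      apply Finset.filter_congr
      intro ω hω
      have := hpen ω hω
      constructor
      · rintro ⟨h1, h2, h3⟩; exact ⟨h1, by omega⟩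
      · rintro ⟨h1, h2⟩; exact ⟨h1, by omega, by omega⟩
  rw [e1, e2, e3]
  by_cases h0 : h = 0
  · rw [if_pos h0, if_pos h0, Finset.sum_empty]
    ring
  · rw [if_neg h0, if_neg h0]
    ring

lemma WS'_succ_zero (lev dwn : ℕ → R) (t h : ℕ) :
    WS' lev dwn (t+1) 0 h = dwn (h+1) * WS' lev dwn t 0 (h+1) := by
  rw [WS_split]
  have z1 : ∀ p : ℕ, (p ≤ h + 1 ∧ h ≤ p + 1) → ¬ (p = h + 1) →
      ∑ ω ∈ (pathsTo (t+1) h).filter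
          (fun ω => psize ω = 0 ∧ ω (Fin.last t).castSucc = p), wprod lev dwn ω = 0 := by
    intro p hadj hp
    rw [peel_master lev dwn t h p 0 hadj]
    rw [if_neg hp]
    have : (pathsTo t p).filter (fun ω' => psize ω' + 1 = 0) = ∅ := by
      apply Finset.filter_false_of_mem
      intro ω _
      omega
    rw [this, Finset.sum_empty, mul_zero]
  rw [z1 h ⟨by omega, by omega⟩ (by omega)]
  have z2 : (if h = 0 then (0:R) else ∑ ω ∈ (pathsTo (t+1) h).filter
      (fun ω => psize ω = 0 ∧ ω (Fin.last t).castSucc = h - 1), wprod lev dwn ω) = 0 := by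
    by_cases h0 : h = 0
    · rw [if_pos h0]
    · rw [if_neg h0, z1 (h-1) ⟨by omega, by omega⟩ (by omega)]
  rw [z2]
  rw [peel_master lev dwn t h (h+1) 0 ⟨by omega, by omega⟩]
  rw [if_neg (by omega : ¬ (h = h+1)), if_neg (by omega : ¬ (h = h+1+1)),
    if_pos rfl]
  have : (pathsTo t (h+1)).filter (fun ω' => psize ω' + 0 = 0)
      = (pathsTo t (h+1)).filter (fun ω' => psize ω' = 0) := by
    apply Finset.filter_congr
    intro ω _
    omega
  rw [this]
  unfold WS'
  ring

lemma WS'_succ (lev dwn : ℕ → R) (t s h : ℕ) :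
    WS' lev dwn (t+1) (s+1) h
      = lev h * WS' lev dwn t s h + (if h = 0 then 0 else WS' lev dwn t s (h-1))
        + dwn (h+1) * WS' lev dwn t (s+1) (h+1) := by
  rw [WS_split]
  congr 1
  · congr 1
    · -- level part
      rw [peel_master lev dwn t h h (s+1) ⟨by omega, by omega⟩]
      rw [if_pos rfl, if_neg (by omega : ¬ (h = h+1))]
      have : (pathsTo t h).filter (fun ω' => psize ω' + 1 = s + 1)
          = (pathsTo t h).filter (fun ω' => psize ω' = s) := by
        apply Finset.filter_congr
        intro ω _
        omega
      rw [this]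
      rfl
    · -- up part
      by_cases h0 : h = 0
      · rw [if_pos h0, if_pos h0]
      · rw [if_neg h0, if_neg h0]
        rw [peel_master lev dwn t h (h-1) (s+1) ⟨by omega, by omega⟩]
        rw [if_neg (by omega : ¬ (h = h - 1)), if_pos (by omega : h = (h-1) + 1),
          if_neg (by omega : ¬ (h - 1 = h + 1))]
        have : (pathsTo t (h-1)).filter (fun ω' => psize ω' + 1 = s + 1)
            = (pathsTo t (h-1)).filter (fun ω' => psize ω' = s) := by
          apply Finset.filter_congr
          intro ω _
          omega
        rw [this, one_mul]
        rfl
  · -- down part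
    rw [peel_master lev dwn t h (h+1) (s+1) ⟨by omega, by omega⟩]
    rw [if_neg (by omega : ¬ (h = h+1)), if_neg (by omega : ¬ (h = h+1+1)), if_pos rfl]
    have : (pathsTo t (h+1)).filter (fun ω' => psize ω' + 0 = s + 1)
        = (pathsTo t (h+1)).filter (fun ω' => psize ω' = s + 1) := by
      apply Finset.filter_congr
      intro ω _
      omega
    rw [this]
    rfl



lemma count_up_down {t h : ℕ} {ω : Fin (t+1) → ℕ} (hω : ω ∈ pathsTo t h) :
    (Finset.univ.filter (fun i : Fin t => ω i.succ = ω i.castSucc + 1)).card =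
    (Finset.univ.filter (fun i : Fin t => ω i.succ + 1 = ω i.castSucc)).card + h := by
  rw [mem_pathsTo] at hω
  obtain ⟨h0, hl, htr⟩ := hω
  have key : ∀ i : Fin t, ω i.succ + (if ω i.succ + 1 = ω i.castSucc then 1 else 0)
      = ω i.castSucc + (if ω i.succ = ω i.castSucc + 1 then 1 else 0) := by
    intro i
    have := htr i
    split <;> split <;> omega
  have hsum : ∑ i : Fin t, ω i.succ + ∑ i : Fin t, (if ω i.succ + 1 = ω i.castSucc then 1 else 0)
      = ∑ i : Fin t, ω i.castSucc + ∑ i : Fin t, (if ω i.succ = ω i.castSucc + 1 then 1 else 0) := by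
    rw [← Finset.sum_add_distrib, ← Finset.sum_add_distrib]
    exact Finset.sum_congr rfl (fun i _ => key i)
  have h1 : ∑ i : Fin (t+1), ω i = ω 0 + ∑ i : Fin t, ω i.succ := Fin.sum_univ_succ ω
  have h2 : ∑ i : Fin (t+1), ω i = (∑ i : Fin t, ω i.castSucc) + ω (Fin.last t) :=
    Fin.sum_univ_castSucc ω
  rw [Finset.card_filter, Finset.card_filter]
  omega

lemma count_total {t h : ℕ} {ω : Fin (t+1) → ℕ} (hω : ω ∈ pathsTo t h) :
    (Finset.univ.filter (fun i : Fin t => ω i.succ = ω i.castSucc)).card +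
    (Finset.univ.filter (fun i : Fin t => ω i.succ = ω i.castSucc + 1)).card +
    (Finset.univ.filter (fun i : Fin t => ω i.succ + 1 = ω i.castSucc)).card = t := by
  rw [mem_pathsTo] at hω
  obtain ⟨-, -, htr⟩ := hω
  have key : ∀ i : Fin t, ((if ω i.succ = ω i.castSucc then 1 else 0) +
      (if ω i.succ = ω i.castSucc + 1 then 1 else 0)) +
      (if ω i.succ + 1 = ω i.castSucc then 1 else 0) = 1 := by
    intro i; have := htr i; split <;> split <;> split <;> omega
  rw [Finset.card_filter, Finset.card_filter, Finset.card_filter]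
  have := Finset.sum_congr rfl (fun i (_ : i ∈ Finset.univ) => key i)
  simp only [Finset.sum_add_distrib] at this
  simpa using this

lemma WS'_eq_zero (lev dwn : ℕ → R) {t s h : ℕ} (hth : 2*s < t + h) :
    WS' lev dwn t s h = 0 := by
  unfold WS'
  apply Finset.sum_eq_zero
  intro ω hω
  exfalso
  rw [Finset.mem_filter] at hω
  obtain ⟨hmem, hsz⟩ := hω
  have c1 := count_up_down hmem
  have c2 := count_total hmem
  unfold psize at hsz
  omega

lemma WS'_eq_zero_h (lev dwn : ℕ → R) {t s h : ℕ} (hsh : s < h) :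
    WS' lev dwn t s h = 0 := by
  unfold WS'
  apply Finset.sum_eq_zero
  intro ω hω
  exfalso
  rw [Finset.mem_filter] at hω
  obtain ⟨hmem, hsz⟩ := hω
  have c1 := count_up_down hmem
  unfold psize at hsz
  omega

lemma WS'_zero_t (lev dwn : ℕ → R) (s h : ℕ) :
    WS' lev dwn 0 s h = if s = 0 ∧ h = 0 then 1 else 0 := by
  unfold WS'
  by_cases hs : s = 0 ∧ h = 0
  · obtain ⟨rfl, rfl⟩ := hs
    rw [if_pos ⟨rfl, rfl⟩]
    have hset : (pathsTo 0 0).filter (fun ω => psize ω = 0) = {fun _ => 0} := by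
      ext ω
      simp only [Finset.mem_filter, Finset.mem_singleton]
      constructor
      · rintro ⟨hmem, -⟩
        have h0 := ((mem_pathsTo ω).1 hmem).1
        funext i
        have : i = 0 := Fin.fin_one_eq_zero i
        rw [this, h0]
      · rintro rfl
        constructor
        · rw [mem_pathsTo]
          exact ⟨rfl, rfl, fun i => i.elim0⟩
        · unfold psize
          simp
    rw [hset, Finset.sum_singleton]
    unfold wprod
    simp
  · rw [if_neg hs]
    apply Finset.sum_eq_zero
    intro ω hω
    exfalso
    rw [Finset.mem_filter] at hω
    obtain ⟨hmem, hsz⟩ := hω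
    obtain ⟨h0, hl, -⟩ := (mem_pathsTo ω).1 hmem
    have hl0 : (Fin.last 0) = (0 : Fin 1) := rfl
    rw [hl0, h0] at hl
    unfold psize at hsz
    simp only [Finset.univ_eq_empty, Finset.filter_empty, Finset.card_empty] at hsz
    exact hs ⟨hsz.symm, hl.symm⟩

def G' (lev dwn : ℕ → R) (s h : ℕ) : R := ∑ t ∈ Finset.range (2*s+1), WS' lev dwn t s h

lemma G'_zero (lev dwn : ℕ → R) (h : ℕ) : G' lev dwn 0 h = if h = 0 then 1 else 0 := by
  unfold G'
  rw [show 2*0+1 = 1 by ring, Finset.sum_range_one, WS'_zero_t]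
  by_cases h0 : h = 0
  · rw [if_pos h0, if_pos ⟨rfl, h0⟩]
  · rw [if_neg h0, if_neg (by tauto)]

lemma G'_vanish (lev dwn : ℕ → R) {s h : ℕ} (hsh : s < h) : G' lev dwn s h = 0 := by
  unfold G'
  exact Finset.sum_eq_zero (fun t _ => WS'_eq_zero_h lev dwn hsh)

lemma G'_succ (lev dwn : ℕ → R) (s h : ℕ) :
    G' lev dwn (s+1) h = lev h * G' lev dwn s h + (if h = 0 then 0 else G' lev dwn s (h-1))
      + dwn (h+1) * G' lev dwn (s+1) (h+1) := by
  have key : G' lev dwn (s+1) h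
      = ∑ t ∈ Finset.range (2*s+2), WS' lev dwn (t+1) (s+1) h := by
    unfold G'
    rw [show 2*(s+1)+1 = (2*s+2)+1 by ring, Finset.sum_range_succ']
    rw [WS'_zero_t]
    rw [if_neg (by rintro ⟨h1, -⟩; omega), add_zero]
  rw [key]
  have expand : ∀ t ∈ Finset.range (2*s+2), WS' lev dwn (t+1) (s+1) h
      = lev h * WS' lev dwn t s h + (if h = 0 then 0 else WS' lev dwn t s (h-1))
        + dwn (h+1) * WS' lev dwn t (s+1) (h+1) := fun t _ => WS'_succ lev dwn t s h
  rw [Finset.sum_congr rfl expand]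
  rw [Finset.sum_add_distrib, Finset.sum_add_distrib]
  have p1 : ∑ t ∈ Finset.range (2*s+2), lev h * WS' lev dwn t s h = lev h * G' lev dwn s h := by
    rw [← Finset.mul_sum]
    congr 1
    unfold G'
    rw [Finset.sum_range_succ, WS'_eq_zero lev dwn (by omega), add_zero]
  have p2 : ∑ t ∈ Finset.range (2*s+2), (if h = 0 then (0:R) else WS' lev dwn t s (h-1))
      = (if h = 0 then 0 else G' lev dwn s (h-1)) := by
    by_cases h0 : h = 0
    · simp [h0]
    · simp only [if_neg h0]
      unfold G'
      rw [Finset.sum_range_succ, WS'_eq_zero lev dwn (by omega), add_zero]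
  have p3 : ∑ t ∈ Finset.range (2*s+2), dwn (h+1) * WS' lev dwn t (s+1) (h+1)
      = dwn (h+1) * G' lev dwn (s+1) (h+1) := by
    rw [← Finset.mul_sum]
    congr 1
    unfold G'
    rw [show 2*(s+1)+1 = (2*s+2)+1 by ring,
      Finset.sum_range_succ (f := fun t => WS' lev dwn t (s+1) (h+1)) (n := 2*s+2),
      WS'_eq_zero lev dwn (by omega), add_zero]
  rw [p1, p2, p3]



lemma psize_head {t : ℕ} (ω : Fin (t+2) → ℕ) :
    psize ω = ((if ω (0 : Fin (t+1)).succ = ω (0 : Fin (t+1)).castSucc then 1 else 0)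
      + (if ω (0 : Fin (t+1)).succ = ω (0 : Fin (t+1)).castSucc + 1 then 1 else 0))
      + psize (Fin.tail ω) := by
  unfold psize
  rw [Finset.card_filter, Finset.card_filter, Finset.card_filter, Finset.card_filter,
    Fin.sum_univ_succ (f := fun i : Fin (t+1) => if ω i.succ = ω i.castSucc then (1:ℕ) else 0),
    Fin.sum_univ_succ (f := fun i : Fin (t+1) => if ω i.succ = ω i.castSucc + 1 then (1:ℕ) else 0)]
  have h1 : ∀ i : Fin t, (if ω (i.succ).succ = ω (i.succ).castSucc then (1:ℕ) else 0)
      = if Fin.tail ω i.succ = Fin.tail ω i.castSucc then 1 else 0 := by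
    intro i
    rw [← Fin.succ_castSucc]
    rfl
  have h2 : ∀ i : Fin t, (if ω (i.succ).succ = ω (i.succ).castSucc + 1 then (1:ℕ) else 0)
      = if Fin.tail ω i.succ = Fin.tail ω i.castSucc + 1 then 1 else 0 := by
    intro i
    rw [← Fin.succ_castSucc]
    rfl
  rw [Finset.sum_congr rfl (fun i _ => h1 i), Finset.sum_congr rfl (fun i _ => h2 i)]
  ring

lemma wprod_head (lev dwn : ℕ → R) {t : ℕ} (ω : Fin (t+2) → ℕ) :
    wprod lev dwn ω =
      (if ω (0 : Fin (t+1)).succ = ω (0 : Fin (t+1)).castSucc then lev (ω (0 : Fin (t+1)).castSucc)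
       else if ω (0 : Fin (t+1)).succ + 1 = ω (0 : Fin (t+1)).castSucc then
         dwn (ω (0 : Fin (t+1)).castSucc)
       else 1) * wprod lev dwn (Fin.tail ω) := by
  unfold wprod
  rw [Fin.prod_univ_succ]
  rfl

lemma tail_mem {t : ℕ} {ω : Fin (t+2) → ℕ} (hω : ω ∈ pathsTo (t+1) 0)
    (h1 : ω ⟨1, by omega⟩ = 0) : Fin.tail ω ∈ pathsTo t 0 := by
  rw [mem_pathsTo] at hω ⊢
  obtain ⟨h0, hl, hstep⟩ := hω
  refine ⟨?_, ?_, ?_⟩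
  · show ω (0 : Fin (t+1)).succ = 0
    have : (0 : Fin (t+1)).succ = ⟨1, by omega⟩ := rfl
    rw [this, h1]
  · show ω (Fin.last t).succ = 0
    rw [Fin.succ_last]
    exact hl
  · intro i
    have := hstep i.succ
    rw [← Fin.succ_castSucc] at this
    exact this

lemma cons_mem {t : ℕ} {ω' : Fin (t+1) → ℕ} (hω : ω' ∈ pathsTo t 0) :
    (Fin.cons 0 ω' : Fin (t+2) → ℕ) ∈ pathsTo (t+1) 0 := by
  rw [mem_pathsTo] at hω ⊢
  obtain ⟨h0, hl, hstep⟩ := hω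
  refine ⟨?_, ?_, ?_⟩
  · exact Fin.cons_zero (α := fun _ => ℕ) 0 ω'
  · have : (Fin.last (t+1)) = (Fin.last t).succ := (Fin.succ_last t).symm
    rw [this]
    show (Fin.cons (0:ℕ) ω' : Fin (t+2) → ℕ) (Fin.last t).succ = 0
    rw [Fin.cons_succ]
    exact hl
  · intro i
    induction i using Fin.cases with
    | zero =>
        have e1 : (Fin.cons 0 ω' : Fin (t+2) → ℕ) (0 : Fin (t+1)).succ = ω' 0 :=
          Fin.cons_succ (α := fun _ => ℕ) 0 ω' 0
        have e2 : (Fin.cons 0 ω' : Fin (t+2) → ℕ) (0 : Fin (t+1)).castSucc = 0 := by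
          rw [Fin.castSucc_zero]
          exact Fin.cons_zero (α := fun _ => ℕ) 0 ω'
        rw [e1, e2, h0]
        omega
    | succ j =>
        have e1 : (Fin.cons 0 ω' : Fin (t+2) → ℕ) (j.succ).succ = ω' j.succ :=
          Fin.cons_succ (α := fun _ => ℕ) 0 ω' j.succ
        have e2 : (Fin.cons 0 ω' : Fin (t+2) → ℕ) (j.succ).castSucc = ω' j.castSucc := by
          rw [← Fin.succ_castSucc]
          exact Fin.cons_succ (α := fun _ => ℕ) 0 ω' j.castSucc
        rw [e1, e2]
        exact hstep j

lemma peel_front (lev dwn : ℕ → R) (t s : ℕ) :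
    ∑ ω ∈ (pathsTo (t+1) 0).filter
        (fun ω => psize ω = s + 1 ∧ 0 < t + 1 ∧ ∀ i : Fin (t+2), (i:ℕ) = 1 → ω i = 0),
      wprod lev dwn ω
    = lev 0 * WS' lev dwn t s 0 := by
  unfold WS'
  rw [Finset.mul_sum]
  refine Finset.sum_nbij' (fun ω => Fin.tail ω) (fun ω' => Fin.cons 0 ω') ?_ ?_ ?_ ?_ ?_
  · intro ω hω
    rw [Finset.mem_filter] at hω ⊢
    obtain ⟨hmem, hsz, -, hone⟩ := hω
    have h1 : ω ⟨1, by omega⟩ = 0 := hone ⟨1, by omega⟩ rfl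
    refine ⟨tail_mem hmem h1, ?_⟩
    show psize (Fin.tail ω) = s
    have hd := psize_head ω
    have h0 : ω (0 : Fin (t+1)).castSucc = 0 := by
      rw [Fin.castSucc_zero]
      exact ((mem_pathsTo ω).1 hmem).1
    have hsucc : ω (0 : Fin (t+1)).succ = 0 := by
      have : (0 : Fin (t+1)).succ = (⟨1, by omega⟩ : Fin (t+2)) := rfl
      rw [this, h1]
    rw [h0, hsucc] at hd
    simp at hd
    omega
  · intro ω' hω'
    rw [Finset.mem_filter] at hω' ⊢
    obtain ⟨hmem, hsz⟩ := hω'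
    refine ⟨cons_mem hmem, ?_, by omega, ?_⟩
    · show psize (Fin.cons 0 ω' : Fin (t+2) → ℕ) = s + 1
      have hd := psize_head (Fin.cons 0 ω' : Fin (t+2) → ℕ)
      have h0 : (Fin.cons 0 ω' : Fin (t+2) → ℕ) (0 : Fin (t+1)).castSucc = 0 := by
        rw [Fin.castSucc_zero]
        exact Fin.cons_zero (α := fun _ => ℕ) 0 ω'
      have hsucc : (Fin.cons 0 ω' : Fin (t+2) → ℕ) (0 : Fin (t+1)).succ = 0 := by
        rw [Fin.cons_succ]
        exact ((mem_pathsTo ω').1 hmem).1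
      rw [h0, hsucc, Fin.tail_cons] at hd
      simp at hd
      omega
    · intro i hi
      have : i = (0 : Fin (t+1)).succ := by
        apply Fin.ext
        rw [hi]
        rfl
      rw [this]
      show (Fin.cons (0:ℕ) ω' : Fin (t+2) → ℕ) (Fin.succ 0) = 0
      rw [Fin.cons_succ]
      exact ((mem_pathsTo ω').1 hmem).1
  · intro ω hω
    rw [Finset.mem_filter] at hω
    have h0 : ω 0 = 0 := ((mem_pathsTo ω).1 hω.1).1
    show (Fin.cons (0:ℕ) (Fin.tail ω) : Fin (t+2) → ℕ) = ω
    rw [← h0]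
    exact Fin.cons_self_tail ω
  · intro ω' _
    show Fin.tail (Fin.cons (0:ℕ) ω' : Fin (t+2) → ℕ) = ω'
    exact Fin.tail_cons (α := fun _ => ℕ) 0 ω'
  · intro ω hω
    rw [Finset.mem_filter] at hω
    obtain ⟨hmem, hsz, -, hone⟩ := hω
    have hd := wprod_head lev dwn ω
    have h0 : ω (0 : Fin (t+1)).castSucc = 0 := by
      rw [Fin.castSucc_zero]
      exact ((mem_pathsTo ω).1 hmem).1
    have hsucc : ω (0 : Fin (t+1)).succ = 0 := by
      have h1 : ω ⟨1, by omega⟩ = 0 := hone ⟨1, by omega⟩ rfl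
      have : (0 : Fin (t+1)).succ = (⟨1, by omega⟩ : Fin (t+2)) := rfl
      rw [this, h1]
    rw [hd, h0, hsucc]
    simp

lemma neg_side (lev dwn : ℕ → R) (s : ℕ) :
    (∑ t ∈ Finset.range (2*(s+1)+1), ∑ ω ∈ (pathsTo t 0).filter
        (fun ω => psize ω = s + 1 ∧ 0 < t ∧ ∀ i : Fin (t+1), (i:ℕ) = 1 → ω i = 0),
      wprod lev dwn ω)
    = lev 0 * G' lev dwn s 0 := by
  rw [show 2*(s+1)+1 = (2*s+2)+1 by ring, Finset.sum_range_succ']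
  have ht0 : (∑ ω ∈ (pathsTo 0 0).filter
      (fun ω => psize ω = s + 1 ∧ 0 < 0 ∧ ∀ i : Fin 1, (i:ℕ) = 1 → ω i = 0),
      wprod lev dwn ω) = 0 := by
    apply Finset.sum_eq_zero
    intro ω hω
    rw [Finset.mem_filter] at hω
    exact absurd hω.2.2.1 (by omega)
  rw [ht0, add_zero]
  have key : ∀ x ∈ Finset.range (2*s+2),
      (∑ ω ∈ (pathsTo (x+1) 0).filter
        (fun ω => psize ω = s + 1 ∧ 0 < x + 1 ∧ ∀ i : Fin (x+2), (i:ℕ) = 1 → ω i = 0),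
      wprod lev dwn ω) = lev 0 * WS' lev dwn x s 0 := by
    intro x _
    exact peel_front lev dwn x s
  rw [Finset.sum_congr rfl key, ← Finset.mul_sum]
  congr 1
  unfold G'
  rw [Finset.sum_range_succ (f := fun t => WS' lev dwn t s 0) (n := 2*s+1),
    WS'_eq_zero lev dwn (by omega), add_zero]

variable {R : Type*} [CommRing R]

lemma sum_fin_single {N : ℕ} (f : Fin N → R) (c : ℕ) :
    (∑ m : Fin N, if (m:ℕ) = c then f m else 0) = if hc : c < N then f ⟨c, hc⟩ else 0 := by
  by_cases hc : c < N
  · rw [dif_pos hc]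
    rw [Finset.sum_eq_single (⟨c, hc⟩ : Fin N)]
    · rw [if_pos rfl]
    · intro m _ hm
      rw [if_neg (fun h => hm (Fin.ext h))]
    · intro h
      exact absurd (Finset.mem_univ _) h
  · rw [dif_neg hc]
    apply Finset.sum_eq_zero
    intro m _
    exact if_neg (fun h => absurd (h ▸ m.isLt) hc)

def Ymat (N : ℕ) (lev : ℕ → R) : Matrix (Fin N) (Fin N) R :=
  Matrix.of fun h k => if (k:ℕ) = h then lev h else if (k:ℕ) = (h:ℕ)+1 then 1 else 0

def Zmat (N : ℕ) (dwn : ℕ → R) : Matrix (Fin N) (Fin N) R :=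
  Matrix.of fun h k => if (k:ℕ) ≤ h then ∏ t ∈ Finset.Icc ((k:ℕ)+1) (h:ℕ), dwn t else 0

def Zinv (N : ℕ) (dwn : ℕ → R) : Matrix (Fin N) (Fin N) R :=
  Matrix.of fun h k => if (k:ℕ) = h then 1 else if (k:ℕ)+1 = h then -dwn h else 0

def Yinv (N : ℕ) (binv' : ℕ → R) : Matrix (Fin N) (Fin N) R :=
  Matrix.of fun h k =>
    if (h:ℕ) ≤ k then (-1)^((k:ℕ) - h) * ∏ t ∈ Finset.Icc (h:ℕ) (k:ℕ), binv' t else 0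

def Tmat (N : ℕ) (lev dwn : ℕ → R) : Matrix (Fin N) (Fin N) R := Ymat N lev * Zmat N dwn

lemma mul_Y_apply {N : ℕ} (lev : ℕ → R) (C : Matrix (Fin N) (Fin N) R) (h k : Fin N) :
    (Ymat N lev * C) h k
      = lev h * C h k + (if hc : (h:ℕ)+1 < N then C ⟨(h:ℕ)+1, hc⟩ k else 0) := by
  rw [Matrix.mul_apply]
  have hsplit : ∀ m : Fin N, Ymat N lev h m * C m k
      = (if (m:ℕ) = (h:ℕ) then lev h * C m k else 0)
        + (if (m:ℕ) = (h:ℕ)+1 then C m k else 0) := by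
    intro m
    show (if (m:ℕ) = h then lev (h:ℕ) else if (m:ℕ) = (h:ℕ)+1 then 1 else 0) * C m k = _
    by_cases h1 : (m:ℕ) = (h:ℕ)
    · rw [if_pos h1, if_pos h1, if_neg (by omega), add_zero]
    · rw [if_neg h1, if_neg h1]
      by_cases h2 : (m:ℕ) = (h:ℕ)+1
      · rw [if_pos h2, if_pos h2, one_mul, zero_add]
      · rw [if_neg h2, if_neg h2, zero_mul, add_zero]
  rw [Finset.sum_congr rfl (fun m _ => hsplit m), Finset.sum_add_distrib,
    sum_fin_single (fun m => lev h * C m k) h, sum_fin_single (fun m => C m k) ((h:ℕ)+1),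
    dif_pos h.isLt]

lemma mul_Zinv_apply {N : ℕ} (dwn : ℕ → R) (C : Matrix (Fin N) (Fin N) R) (h k : Fin N) :
    (C * Zinv N dwn) h k
      = C h k - (if hc : (k:ℕ)+1 < N then C h ⟨(k:ℕ)+1, hc⟩ * dwn ((k:ℕ)+1) else 0) := by
  rw [Matrix.mul_apply]
  have hsplit : ∀ m : Fin N, C h m * Zinv N dwn m k
      = (if (m:ℕ) = (k:ℕ) then C h m else 0)
        + (if (m:ℕ) = (k:ℕ)+1 then -(C h m * dwn m) else 0) := by
    intro m
    show C h m * (if (k:ℕ) = m then 1 else if (k:ℕ)+1 = m then -dwn (m:ℕ) else 0) = _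
    by_cases h1 : (m:ℕ) = (k:ℕ)
    · rw [if_pos h1.symm, if_pos h1, if_neg (by omega), mul_one, add_zero]
    · rw [if_neg (fun hx => h1 hx.symm), if_neg h1]
      by_cases h2 : (m:ℕ) = (k:ℕ)+1
      · rw [if_pos h2.symm, if_pos h2, zero_add]
        ring
      · rw [if_neg (fun hx => h2 hx.symm), if_neg h2, mul_zero, add_zero]
  rw [Finset.sum_congr rfl (fun m _ => hsplit m), Finset.sum_add_distrib,
    sum_fin_single (fun m => C h m) (k:ℕ), sum_fin_single (fun m => -(C h m * dwn m)) ((k:ℕ)+1),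
    dif_pos k.isLt]
  have e1 : (⟨(k:ℕ), k.isLt⟩ : Fin N) = k := Fin.eta k k.isLt
  rw [e1]
  by_cases hc : (k:ℕ)+1 < N
  · rw [dif_pos hc, dif_pos hc]
    ring
  · rw [dif_neg hc, dif_neg hc]
    ring

lemma Zinv_mul_apply {N : ℕ} (dwn : ℕ → R) (C : Matrix (Fin N) (Fin N) R) (h k : Fin N) :
    (Zinv N dwn * C) h k
      = C h k + (if h1 : 1 ≤ (h:ℕ) then
          -dwn h * C ⟨(h:ℕ)-1, lt_of_le_of_lt (Nat.sub_le _ _) h.isLt⟩ k else 0) := by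
  rw [Matrix.mul_apply]
  have hsplit : ∀ m : Fin N, Zinv N dwn h m * C m k
      = (if (m:ℕ) = (h:ℕ) then C m k else 0)
        + (if 1 ≤ (h:ℕ) ∧ (m:ℕ) = (h:ℕ)-1 then -dwn h * C m k else 0) := by
    intro m
    show (if (m:ℕ) = h then 1 else if (m:ℕ)+1 = h then -dwn (h:ℕ) else 0) * C m k = _
    by_cases h1 : (m:ℕ) = (h:ℕ)
    · rw [if_pos h1, if_pos h1, if_neg (by omega), one_mul, add_zero]
    · rw [if_neg h1, if_neg h1]
      by_cases h2 : (m:ℕ)+1 = (h:ℕ)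
      · rw [if_pos h2, if_pos (by omega), zero_add]
      · rw [if_neg h2, if_neg (by omega), zero_mul, add_zero]
  rw [Finset.sum_congr rfl (fun m _ => hsplit m), Finset.sum_add_distrib,
    sum_fin_single (fun m => C m k) (h:ℕ), dif_pos h.isLt]
  have e1 : (⟨(h:ℕ), h.isLt⟩ : Fin N) = h := Fin.eta h h.isLt
  rw [e1]
  congr 1
  by_cases h1 : 1 ≤ (h:ℕ)
  · rw [dif_pos h1]
    have : ∀ m : Fin N, (if 1 ≤ (h:ℕ) ∧ (m:ℕ) = (h:ℕ)-1 then -dwn h * C m k else 0)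
        = (if (m:ℕ) = (h:ℕ)-1 then -dwn h * C m k else 0) := by
      intro m
      by_cases h2 : (m:ℕ) = (h:ℕ)-1
      · rw [if_pos ⟨h1, h2⟩, if_pos h2]
      · rw [if_neg (fun hx => h2 hx.2), if_neg h2]
    rw [Finset.sum_congr rfl (fun m _ => this m),
      sum_fin_single (fun m => -dwn h * C m k) ((h:ℕ)-1),
      dif_pos (lt_of_le_of_lt (Nat.sub_le _ _) h.isLt)]
  · rw [dif_neg h1]
    apply Finset.sum_eq_zero
    intro m _
    rw [if_neg (fun hx => h1 hx.1)]

lemma Icc_prod_bot {a b : ℕ} (hab : a ≤ b) (f : ℕ → R) :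
    ∏ t ∈ Finset.Icc a b, f t = f a * ∏ t ∈ Finset.Icc (a+1) b, f t := by
  rw [← Finset.Ico_add_one_right_eq_Icc, ← Finset.Ico_add_one_right_eq_Icc]
  exact Finset.prod_eq_prod_Ico_succ_bot (by omega) f

lemma Z_mul_Zinv {N : ℕ} (dwn : ℕ → R) : Zmat N dwn * Zinv N dwn = 1 := by
  ext h k
  rw [mul_Zinv_apply]
  show (if (k:ℕ) ≤ h then ∏ t ∈ Finset.Icc ((k:ℕ)+1) (h:ℕ), dwn t else 0) - _ = _
  by_cases h1 : (h:ℕ) = (k:ℕ)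
  · have hk : h = k := Fin.ext h1
    subst hk
    rw [if_pos le_rfl, Finset.Icc_eq_empty (by omega), Finset.prod_empty]
    have : ∀ hc : (h:ℕ)+1 < N, Zmat N dwn h ⟨(h:ℕ)+1, hc⟩ = 0 := by
      intro hc
      show (if ((h:ℕ)+1 : ℕ) ≤ (h:ℕ) then _ else 0) = 0
      rw [if_neg (by omega)]
    rw [Matrix.one_apply_eq]
    by_cases hc : (h:ℕ)+1 < N
    · rw [dif_pos hc, this hc, zero_mul, sub_zero]
    · rw [dif_neg hc, sub_zero]
  · rw [Matrix.one_apply_ne (fun hx => h1 (congrArg Fin.val hx))]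
    by_cases h2 : (k:ℕ) ≤ (h:ℕ)
    · -- k < h strictly
      have hlt : (k:ℕ) < (h:ℕ) := by omega
      rw [if_pos h2]
      have hc : (k:ℕ)+1 < N := lt_of_le_of_lt hlt h.isLt
      rw [dif_pos hc]
      show _ - (if ((k:ℕ)+1 : ℕ) ≤ (h:ℕ) then ∏ t ∈ Finset.Icc ((k:ℕ)+1+1) (h:ℕ), dwn t else 0)
        * dwn ((k:ℕ)+1) = 0
      rw [if_pos (by omega)]
      rw [Icc_prod_bot (by omega : (k:ℕ)+1 ≤ (h:ℕ)) dwn]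
      ring
    · rw [if_neg h2]
      have : ∀ hc : (k:ℕ)+1 < N, Zmat N dwn h ⟨(k:ℕ)+1, hc⟩ = 0 := by
        intro hc
        show (if ((k:ℕ)+1 : ℕ) ≤ (h:ℕ) then _ else 0) = 0
        rw [if_neg (by omega)]
      by_cases hc : (k:ℕ)+1 < N
      · rw [dif_pos hc, this hc, zero_mul, sub_zero]
      · rw [dif_neg hc, sub_zero]

lemma Y_mul_Yinv {N : ℕ} (lev binv' : ℕ → R) (hinv : ∀ t, lev t * binv' t = 1) :
    Ymat N lev * Yinv N binv' = 1 := by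
  ext h k
  rw [mul_Y_apply]
  show lev (h:ℕ) * (if (h:ℕ) ≤ k then (-1)^((k:ℕ) - h) * ∏ t ∈ Finset.Icc (h:ℕ) (k:ℕ), binv' t
    else 0) + _ = _
  by_cases h1 : (h:ℕ) = (k:ℕ)
  · have hk : h = k := Fin.ext h1
    subst hk
    rw [if_pos le_rfl, Nat.sub_self, pow_zero, one_mul, Finset.Icc_self, Finset.prod_singleton,
      hinv, Matrix.one_apply_eq]
    have : ∀ hc : (h:ℕ)+1 < N, Yinv N binv' ⟨(h:ℕ)+1, hc⟩ h = 0 := by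
      intro hc
      show (if ((h:ℕ)+1 : ℕ) ≤ (h:ℕ) then _ else (0:R)) = 0
      rw [if_neg (by omega)]
    by_cases hc : (h:ℕ)+1 < N
    · rw [dif_pos hc, this hc, add_zero]
    · rw [dif_neg hc, add_zero]
  · rw [Matrix.one_apply_ne (fun hx => h1 (congrArg Fin.val hx))]
    by_cases h2 : (h:ℕ) ≤ (k:ℕ)
    · have hlt : (h:ℕ) < (k:ℕ) := by omega
      have hc : (h:ℕ)+1 < N := lt_of_le_of_lt hlt k.isLt
      rw [if_pos h2, dif_pos hc]
      show lev (h:ℕ) * ((-1)^((k:ℕ) - h) * ∏ t ∈ Finset.Icc (h:ℕ) (k:ℕ), binv' t)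
        + (if ((h:ℕ)+1 : ℕ) ≤ (k:ℕ) then
            (-1)^((k:ℕ) - ((h:ℕ)+1)) * ∏ t ∈ Finset.Icc ((h:ℕ)+1) (k:ℕ), binv' t else 0) = 0
      rw [if_pos (by omega)]
      rw [Icc_prod_bot h2 binv']
      have hpow : ((-1:R))^((k:ℕ) - h) = (-1) * (-1)^((k:ℕ) - ((h:ℕ)+1)) := by
        have : (k:ℕ) - h = ((k:ℕ) - ((h:ℕ)+1)) + 1 := by omega
        rw [this, pow_succ]
        ring
      rw [hpow]
      have := hinv (h:ℕ)
      calc lev (h:ℕ) * ((-1) * (-1)^((k:ℕ) - ((h:ℕ)+1)) *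
            (binv' (h:ℕ) * ∏ t ∈ Finset.Icc ((h:ℕ)+1) (k:ℕ), binv' t))
          + (-1)^((k:ℕ) - ((h:ℕ)+1)) * ∏ t ∈ Finset.Icc ((h:ℕ)+1) (k:ℕ), binv' t
          = (lev (h:ℕ) * binv' (h:ℕ)) * ((-1) * (-1)^((k:ℕ) - ((h:ℕ)+1)) *
            ∏ t ∈ Finset.Icc ((h:ℕ)+1) (k:ℕ), binv' t)
          + (-1)^((k:ℕ) - ((h:ℕ)+1)) * ∏ t ∈ Finset.Icc ((h:ℕ)+1) (k:ℕ), binv' t := by ring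
        _ = 0 := by rw [this]; ring
    · rw [if_neg h2, mul_zero, zero_add]
      have : ∀ hc : (h:ℕ)+1 < N, Yinv N binv' ⟨(h:ℕ)+1, hc⟩ k = 0 := by
        intro hc
        show (if ((h:ℕ)+1 : ℕ) ≤ (k:ℕ) then _ else (0:R)) = 0
        rw [if_neg (by omega)]
      by_cases hc : (h:ℕ)+1 < N
      · rw [dif_pos hc, this hc]
      · rw [dif_neg hc]



lemma Z_apply_le {N : ℕ} (dwn : ℕ → R) (h k : Fin N) (hk : (k:ℕ) ≤ h) :
    Zmat N dwn h k = ∏ t ∈ Finset.Icc ((k:ℕ)+1) (h:ℕ), dwn t := if_pos hk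

lemma Z_apply_gt {N : ℕ} (dwn : ℕ → R) (h k : Fin N) (hk : (h:ℕ) < k) :
    Zmat N dwn h k = 0 := if_neg (by omega)

lemma Yinv_apply_le {N : ℕ} (binv' : ℕ → R) (h k : Fin N) (hk : (h:ℕ) ≤ k) :
    Yinv N binv' h k = (-1)^((k:ℕ) - h) * ∏ t ∈ Finset.Icc (h:ℕ) (k:ℕ), binv' t := if_pos hk

lemma Yinv_apply_gt {N : ℕ} (binv' : ℕ → R) (h k : Fin N) (hk : (k:ℕ) < h) :
    Yinv N binv' h k = 0 := if_neg (by omega)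

lemma T_apply {N : ℕ} (lev dwn : ℕ → R) (h k : Fin N) :
    Tmat N lev dwn h k = lev h * Zmat N dwn h k
      + (if hc : (h:ℕ)+1 < N then Zmat N dwn ⟨(h:ℕ)+1, hc⟩ k else 0) :=
  mul_Y_apply lev (Zmat N dwn) h k

lemma T_upper {N : ℕ} (lev dwn : ℕ → R) (h k : Fin N) (hk : (h:ℕ)+1 < (k:ℕ)) :
    Tmat N lev dwn h k = 0 := by
  rw [T_apply, Z_apply_gt dwn h k (by omega), mul_zero, zero_add]
  by_cases hc : (h:ℕ)+1 < N
  · rw [dif_pos hc, Z_apply_gt dwn ⟨(h:ℕ)+1, hc⟩ k (by show (⟨(h:ℕ)+1, hc⟩ : Fin N).1 < (k:ℕ); simp only [Fin.val_mk]; omega)]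
  · rw [dif_neg hc]

lemma T_super {N : ℕ} (lev dwn : ℕ → R) (h k : Fin N) (hk : (k:ℕ) = (h:ℕ)+1) :
    Tmat N lev dwn h k = 1 := by
  rw [T_apply, Z_apply_gt dwn h k (by omega), mul_zero, zero_add]
  have hc : (h:ℕ)+1 < N := hk ▸ k.isLt
  rw [dif_pos hc, Z_apply_le dwn ⟨(h:ℕ)+1, hc⟩ k
      (by show (k:ℕ) ≤ (⟨(h:ℕ)+1, hc⟩ : Fin N).1; simp only [Fin.val_mk]; omega),
    Finset.Icc_eq_empty (by show ¬ ((k:ℕ)+1 ≤ ((⟨(h:ℕ)+1, hc⟩ : Fin N) : ℕ)); simp only [Fin.val_mk]; omega),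
    Finset.prod_empty]

lemma T_pow_upper {N : ℕ} [NeZero N] (lev dwn : ℕ → R) :
    ∀ (i : ℕ) (k : Fin N), i < (k:ℕ) → (Tmat N lev dwn ^ i) 0 k = 0 := by
  intro i
  induction i with
  | zero =>
      intro k hk
      rw [pow_zero]
      exact Matrix.one_apply_ne (fun hx => by
        have : (0:ℕ) = (k:ℕ) := congrArg Fin.val hx
        omega)
  | succ i ih =>
      intro k hk
      rw [pow_succ, Matrix.mul_apply]
      apply Finset.sum_eq_zero
      intro m _
      by_cases hm : i < (m:ℕ)
      · rw [ih m hm, zero_mul]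
      · rw [T_upper lev dwn m k (by omega), mul_zero]

lemma T_pow_diag {N : ℕ} [NeZero N] (lev dwn : ℕ → R) :
    ∀ (i : ℕ) (hi : i < N), (Tmat N lev dwn ^ i) 0 ⟨i, hi⟩ = 1 := by
  intro i
  induction i with
  | zero =>
      intro hi
      rw [pow_zero]
      have : (⟨0, hi⟩ : Fin N) = 0 := rfl
      rw [this, Matrix.one_apply_eq]
  | succ i ih =>
      intro hi
      rw [pow_succ, Matrix.mul_apply]
      rw [Finset.sum_eq_single (⟨i, by omega⟩ : Fin N)]
      · rw [ih (by omega), one_mul]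
        exact T_super lev dwn _ _ rfl
      · intro m _ hm
        by_cases h1 : i < (m:ℕ)
        · rw [T_pow_upper lev dwn i m h1, zero_mul]
        · have hne : ¬ ((m:ℕ) = i) := fun hx => hm (Fin.ext (by simp only [Fin.val_mk]; exact hx))
          have hlt : (m:ℕ) + 1 < i + 1 := by omega
          rw [T_upper lev dwn m ⟨i+1, hi⟩
            (by show (m:ℕ)+1 < (⟨i+1, hi⟩ : Fin N).1; simp only [Fin.val_mk]; omega), mul_zero]
      · intro hmem
        exact absurd (Finset.mem_univ _) hmem

def Kmat (N : ℕ) (dwn binv' : ℕ → R) : Matrix (Fin N) (Fin N) R := Zinv N dwn * Yinv N binv'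

lemma K_apply {N : ℕ} (dwn binv' : ℕ → R) (h k : Fin N) :
    Kmat N dwn binv' h k = Yinv N binv' h k
      + (if h1 : 1 ≤ (h:ℕ) then
          -dwn h * Yinv N binv' ⟨(h:ℕ)-1, lt_of_le_of_lt (Nat.sub_le _ _) h.isLt⟩ k else 0) :=
  Zinv_mul_apply dwn (Yinv N binv') h k

lemma K_lower {N : ℕ} (dwn binv' : ℕ → R) (h k : Fin N) (hk : (k:ℕ)+1 < (h:ℕ)) :
    Kmat N dwn binv' h k = 0 := by
  rw [K_apply, Yinv_apply_gt binv' h k (by omega), zero_add, dif_pos (by omega : 1 ≤ (h:ℕ)),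
    Yinv_apply_gt binv' _ k (by simp; omega), mul_zero]

lemma K_sub {N : ℕ} (dwn binv' : ℕ → R) (h k : Fin N) (hk : (k:ℕ)+1 = (h:ℕ)) :
    Kmat N dwn binv' h k = -dwn h * binv' k := by
  rw [K_apply, Yinv_apply_gt binv' h k (by omega), zero_add, dif_pos (by omega : 1 ≤ (h:ℕ))]
  have e : ((⟨(h:ℕ)-1, lt_of_le_of_lt (Nat.sub_le _ _) h.isLt⟩ : Fin N) : ℕ) = (k:ℕ) := by
    simp; omega
  rw [Yinv_apply_le binv' _ k (by omega), e, Nat.sub_self, pow_zero, one_mul, Finset.Icc_self,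
    Finset.prod_singleton]



/-! ### right multiplication by `Ymat` -/

lemma mul_Yright_apply {N : ℕ} (lev : ℕ → R) (C : Matrix (Fin N) (Fin N) R) (a k : Fin N) :
    (C * Ymat N lev) a k
      = lev k * C a k + (if h1 : 1 ≤ (k:ℕ) then
          C a ⟨(k:ℕ)-1, lt_of_le_of_lt (Nat.sub_le _ _) k.isLt⟩ else 0) := by
  rw [Matrix.mul_apply]
  have hsplit : ∀ m : Fin N, C a m * Ymat N lev m k
      = (if (m:ℕ) = (k:ℕ) then lev k * C a m else 0)
        + (if 1 ≤ (k:ℕ) ∧ (m:ℕ) = (k:ℕ)-1 then C a m else 0) := by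
    intro m
    show C a m * (if (k:ℕ) = m then lev (m:ℕ) else if (k:ℕ) = (m:ℕ)+1 then 1 else 0) = _
    by_cases h1 : (m:ℕ) = (k:ℕ)
    · rw [if_pos h1.symm, if_pos h1, if_neg (by omega)]
      rw [h1, add_zero]
      ring
    · rw [if_neg (fun hx => h1 hx.symm), if_neg h1]
      by_cases h2 : (k:ℕ) = (m:ℕ)+1
      · rw [if_pos h2, if_pos (by omega), mul_one, zero_add]
      · rw [if_neg h2, if_neg (by omega), mul_zero, add_zero]
  rw [Finset.sum_congr rfl (fun m _ => hsplit m), Finset.sum_add_distrib,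
    sum_fin_single (fun m => lev k * C a m) (k:ℕ), dif_pos k.isLt]
  have e1 : (⟨(k:ℕ), k.isLt⟩ : Fin N) = k := Fin.eta k k.isLt
  rw [e1]
  congr 1
  by_cases h1 : 1 ≤ (k:ℕ)
  · rw [dif_pos h1]
    have : ∀ m : Fin N, (if 1 ≤ (k:ℕ) ∧ (m:ℕ) = (k:ℕ)-1 then C a m else 0)
        = (if (m:ℕ) = (k:ℕ)-1 then C a m else 0) := by
      intro m
      by_cases h2 : (m:ℕ) = (k:ℕ)-1
      · rw [if_pos ⟨h1, h2⟩, if_pos h2]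
      · rw [if_neg (fun hx => h2 hx.2), if_neg h2]
    rw [Finset.sum_congr rfl (fun m _ => this m),
      sum_fin_single (fun m => C a m) ((k:ℕ)-1),
      dif_pos (lt_of_le_of_lt (Nat.sub_le _ _) k.isLt)]
  · rw [dif_neg h1]
    apply Finset.sum_eq_zero
    intro m _
    rw [if_neg (fun hx => h1 hx.1)]

/-! ### the algebraic vector and its recurrence -/

def valg {N : ℕ} [NeZero N] (T : Matrix (Fin N) (Fin N) R) (m h : ℕ) : R :=
  if hc : h < N then (T ^ m) 0 ⟨h, hc⟩ else 0

lemma valg_zero {N : ℕ} [NeZero N] (T : Matrix (Fin N) (Fin N) R) (h : ℕ) :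
    valg T 0 h = if h = 0 then 1 else 0 := by
  unfold valg
  by_cases hc : h < N
  · rw [dif_pos hc, pow_zero]
    by_cases h0 : h = 0
    · subst h0
      rw [if_pos rfl]
      have : (⟨0, hc⟩ : Fin N) = 0 := rfl
      rw [this, Matrix.one_apply_eq]
    · rw [if_neg h0]
      exact Matrix.one_apply_ne (fun hx => h0 (by
        have := congrArg Fin.val hx
        simpa using this.symm))
  · rw [dif_neg hc, if_neg (by have := Nat.pos_of_ne_zero (NeZero.ne N); omega)]

lemma valg_vanish {N : ℕ} [NeZero N] (lev dwn : ℕ → R) (m h : ℕ) (hmh : m < h) :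
    valg (Tmat N lev dwn) m h = 0 := by
  unfold valg
  by_cases hc : h < N
  · rw [dif_pos hc]
    exact T_pow_upper lev dwn m ⟨h, hc⟩ (by simpa using hmh)
  · rw [dif_neg hc]

lemma valg_rec {N : ℕ} [NeZero N] (lev dwn : ℕ → R) (m : ℕ) (hm : m + 1 < N) (h : ℕ) :
    valg (Tmat N lev dwn) (m+1) h
      = lev h * valg (Tmat N lev dwn) m h
        + (if h = 0 then 0 else valg (Tmat N lev dwn) m (h-1))
        + dwn (h+1) * valg (Tmat N lev dwn) (m+1) (h+1) := by
  set T := Tmat N lev dwn with hT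
  by_cases hc : h < N
  · have hTZ : T * Zinv N dwn = Ymat N lev := by
      rw [hT]
      unfold Tmat
      rw [Matrix.mul_assoc, Z_mul_Zinv, Matrix.mul_one]
    have hkey : T ^ (m+1) * Zinv N dwn = T ^ m * Ymat N lev := by
      rw [pow_succ, Matrix.mul_assoc, hTZ]
    have hent : (T ^ (m+1) * Zinv N dwn) 0 ⟨h, hc⟩ = (T ^ m * Ymat N lev) 0 ⟨h, hc⟩ := by
      rw [hkey]
    rw [mul_Zinv_apply, mul_Yright_apply] at hent
    simp only [Fin.val_mk] at hent
    unfold valg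
    by_cases h0 : h = 0
    · subst h0
      rw [dif_neg (by omega : ¬ (1 ≤ 0))] at hent
      by_cases hc1 : 0+1 < N
      · rw [dif_pos hc1] at hent
        rw [if_pos rfl, dif_pos hc, dif_pos hc, dif_pos hc1]
        linear_combination hent
      · rw [dif_neg hc1] at hent
        rw [if_pos rfl, dif_pos hc, dif_pos hc, dif_neg hc1]
        linear_combination hent
    · rw [dif_pos (by omega : 1 ≤ h)] at hent
      by_cases hc1 : h+1 < N
      · rw [dif_pos hc1] at hent
        rw [if_neg h0, dif_pos hc, dif_pos hc,
          dif_pos (lt_of_le_of_lt (Nat.sub_le _ _) hc : h-1 < N), dif_pos hc1]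
        linear_combination hent
      · rw [dif_neg hc1] at hent
        rw [if_neg h0, dif_pos hc, dif_pos hc,
          dif_pos (lt_of_le_of_lt (Nat.sub_le _ _) hc : h-1 < N), dif_neg hc1]
        linear_combination hent
  · unfold valg
    rw [dif_neg hc, dif_neg hc]
    have hN : 0 < N := Nat.pos_of_ne_zero (NeZero.ne N)
    rw [if_neg (by omega : ¬ h = 0), dif_neg (by omega : ¬ (h + 1 < N))]
    by_cases hc2 : h - 1 < N
    · rw [dif_pos hc2]
      rw [T_pow_upper lev dwn m ⟨h-1, hc2⟩ (by simp only [Fin.val_mk]; omega)]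
      ring
    · rw [dif_neg hc2]
      ring

/-! ### uniqueness of solutions of the recurrence -/

lemma unique_rec (lev dwn : ℕ → R) (M : ℕ) (F₁ F₂ : ℕ → ℕ → R)
    (hbase : ∀ h, F₁ 0 h = F₂ 0 h)
    (hrec₁ : ∀ m h, m + 1 ≤ M → F₁ (m+1) h = lev h * F₁ m h
      + (if h = 0 then 0 else F₁ m (h-1)) + dwn (h+1) * F₁ (m+1) (h+1))
    (hrec₂ : ∀ m h, m + 1 ≤ M → F₂ (m+1) h = lev h * F₂ m h
      + (if h = 0 then 0 else F₂ m (h-1)) + dwn (h+1) * F₂ (m+1) (h+1))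
    (hvan₁ : ∀ m h, m < h → F₁ m h = 0) (hvan₂ : ∀ m h, m < h → F₂ m h = 0) :
    ∀ m, m ≤ M → ∀ h, F₁ m h = F₂ m h := by
  intro m
  induction m with
  | zero => intro _ h; exact hbase h
  | succ m ih =>
      intro hm
      have key : ∀ dd h, m + 2 ≤ h + dd → F₁ (m+1) h = F₂ (m+1) h := by
        intro dd
        induction dd with
        | zero =>
            intro h hh
            rw [hvan₁ _ _ (by omega), hvan₂ _ _ (by omega)]
        | succ dd ihd =>
            intro h hh
            by_cases hbig : m + 2 ≤ h
            · rw [hvan₁ _ _ (by omega), hvan₂ _ _ (by omega)]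
            · have e1 := ih (by omega) h
              have e3 := ihd (h+1) (by omega)
              rw [hrec₁ m h hm, hrec₂ m h hm, e1, e3]
              by_cases h0 : h = 0
              · rw [if_pos h0, if_pos h0]
              · rw [if_neg h0, if_neg h0, ih (by omega) (h-1)]
      intro h
      exact key (m+2) h (by omega)



lemma Icc_prod_split (f : ℕ → R) (k m : ℕ) (hkm : k ≤ m) :
    ∏ t ∈ Finset.Icc 1 m, f t = (∏ t ∈ Finset.Icc 1 k, f t) * ∏ t ∈ Finset.Icc (k+1) m, f t := by
  rw [← Finset.Ico_add_one_right_eq_Icc, ← Finset.Ico_add_one_right_eq_Icc, ← Finset.Ico_add_one_right_eq_Icc]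
  exact (Finset.prod_Ico_consecutive f (by omega) (by omega)).symm

lemma range_prod_split (f : ℕ → R) (h k : ℕ) (hhk : h ≤ k) :
    ∏ t ∈ Finset.range k, f t = (∏ t ∈ Finset.range h, f t) * ∏ t ∈ Finset.Ico h k, f t := by
  rw [Finset.range_eq_Ico, Finset.range_eq_Ico]
  exact (Finset.prod_Ico_consecutive f (Nat.zero_le h) hhk).symm

lemma Icc_prod_top (f : ℕ → R) (a b : ℕ) (hab : a ≤ b) :
    ∏ t ∈ Finset.Icc a b, f t = (∏ t ∈ Finset.Ico a b, f t) * f b := by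
  rw [← Finset.Ico_add_one_right_eq_Icc]
  exact Finset.prod_Ico_succ_top hab f

lemma Icc_prod_succ_top (f : ℕ → R) (a b : ℕ) (hab : a ≤ b + 1) :
    ∏ t ∈ Finset.Icc a (b+1), f t = (∏ t ∈ Finset.Icc a b, f t) * f (b+1) := by
  rw [← Finset.Ico_add_one_right_eq_Icc, ← Finset.Ico_add_one_right_eq_Icc]
  exact Finset.prod_Ico_succ_top (by omega) f

def dwnP (binv lam : ℕ → R) : ℕ → R := fun t => lam t * binv (t-1) * binv t

def dfun (binv lam : ℕ → R) : ℕ → R :=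
  fun j => (-1)^j * (∏ t ∈ Finset.Icc 1 j, lam t) * (∏ t ∈ Finset.Icc 1 j, binv t)

lemma dfun_zero (binv lam : ℕ → R) : dfun binv lam 0 = 1 := by
  unfold dfun
  rw [Finset.Icc_eq_empty (by omega), Finset.prod_empty, pow_zero]
  ring

lemma dfun_succ (binv lam : ℕ → R) (j : ℕ) :
    dfun binv lam (j+1) = dfun binv lam j * (-(lam (j+1) * binv (j+1))) := by
  unfold dfun
  rw [Icc_prod_succ_top lam 1 j (by omega), Icc_prod_succ_top binv 1 j (by omega), pow_succ]
  ring

lemma dfun_dvd (binv lam : ℕ → R) {k m : ℕ} (hkm : k ≤ m) :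
    dfun binv lam k ∣ dfun binv lam m := by
  refine ⟨(-1)^(m-k) * (∏ t ∈ Finset.Icc (k+1) m, lam t) * (∏ t ∈ Finset.Icc (k+1) m, binv t), ?_⟩
  unfold dfun
  rw [Icc_prod_split lam k m hkm, Icc_prod_split binv k m hkm,
    show ((-1:R))^m = (-1)^k * (-1)^(m-k) from by rw [← pow_add]; congr 1; omega]
  ring

section Conc
variable {N : ℕ} (b binv lam : ℕ → R) (hbb : ∀ t, b t * binv t = 1)
include hbb

lemma K_sub_val (h k : Fin N) (hk : (k:ℕ)+1 = (h:ℕ)) :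
    Kmat N (dwnP binv lam) b h k = -(lam h * binv h) := by
  rw [K_sub]
  · show -(lam (h:ℕ) * binv ((h:ℕ)-1) * binv (h:ℕ)) * b (k:ℕ) = _
    have e : (h:ℕ)-1 = (k:ℕ) := by omega
    rw [e]
    linear_combination (-(lam (h:ℕ) * binv (h:ℕ))) * hbb (k:ℕ)
  · exact hk

lemma J_mul_K : Tmat N binv (dwnP binv lam) * Kmat N (dwnP binv lam) b = 1 := by
  unfold Tmat Kmat
  rw [Matrix.mul_assoc, ← Matrix.mul_assoc (Zmat N (dwnP binv lam)), Z_mul_Zinv,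
    Matrix.one_mul, Y_mul_Yinv binv b (fun t => by linear_combination hbb t)]

lemma K_pow_lower [NeZero N] :
    ∀ (j : ℕ) (k : Fin N), j < (k:ℕ) → (Kmat N (dwnP binv lam) b ^ j) k 0 = 0 := by
  intro j
  induction j with
  | zero =>
      intro k hk
      rw [pow_zero]
      exact Matrix.one_apply_ne (fun hx => by
        have := congrArg Fin.val hx
        simp at this
        have h0 : ((0 : Fin N) : ℕ) = 0 := Nat.zero_mod N
        omega)
  | succ j ih =>
      intro k hk
      rw [pow_succ', Matrix.mul_apply]
      apply Finset.sum_eq_zero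
      intro m _
      by_cases hm : (m:ℕ)+1 < (k:ℕ)
      · rw [K_lower _ _ _ _ hm, zero_mul]
      · rw [ih m (by omega), mul_zero]

lemma K_pow_diag [NeZero N] :
    ∀ (j : ℕ) (hj : j < N), (Kmat N (dwnP binv lam) b ^ j) ⟨j, hj⟩ 0 = dfun binv lam j := by
  intro j
  induction j with
  | zero =>
      intro hj
      rw [pow_zero, dfun_zero]
      have : (⟨0, hj⟩ : Fin N) = 0 := rfl
      rw [this, Matrix.one_apply_eq]
  | succ j ih =>
      intro hj
      rw [pow_succ', Matrix.mul_apply]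
      rw [Finset.sum_eq_single (⟨j, by omega⟩ : Fin N)]
      · rw [ih (by omega), K_sub_val b binv lam hbb _ _ (by simp), dfun_succ]
        show -(lam ((⟨j+1, hj⟩ : Fin N) : ℕ) * binv ((⟨j+1, hj⟩ : Fin N) : ℕ)) * dfun binv lam j = _
        simp only [Fin.val_mk]
        ring
      · intro m _ hm
        by_cases h1 : j < (m:ℕ)
        · rw [K_pow_lower b binv lam hbb j m h1, mul_zero]
        · have hne : ¬ ((m:ℕ) = j) := fun hx => hm (Fin.ext (by simp only [Fin.val_mk]; exact hx))
          rw [K_lower _ _ _ _ (by simp only [Fin.val_mk]; omega), zero_mul]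
      · intro hmem
        exact absurd (Finset.mem_univ _) hmem

lemma K_pow_dvd [NeZero N] :
    ∀ (j : ℕ) (k : Fin N), dfun binv lam (k:ℕ) ∣ (Kmat N (dwnP binv lam) b ^ j) k 0 := by
  intro j
  induction j with
  | zero =>
      intro k
      by_cases hk : k = (0 : Fin N)
      · subst hk
        rw [pow_zero, Matrix.one_apply_eq]
        show dfun binv lam ((0 : Fin N) : ℕ) ∣ 1
        have : ((0 : Fin N) : ℕ) = 0 := rfl
        rw [this, dfun_zero]
      · rw [pow_zero, Matrix.one_apply_ne (fun hx => hk hx)]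
        exact dvd_zero _
  | succ j ih =>
      intro k
      rw [pow_succ', Matrix.mul_apply]
      apply Finset.dvd_sum
      intro m _
      by_cases h1 : (m:ℕ)+1 < (k:ℕ)
      · rw [K_lower _ _ _ _ h1, zero_mul]
        exact dvd_zero _
      · by_cases h2 : (m:ℕ)+1 = (k:ℕ)
        · rw [K_sub_val b binv lam hbb _ _ h2]
          obtain ⟨c, hc⟩ := ih m
          rw [hc]
          refine ⟨c, ?_⟩
          have : dfun binv lam (k:ℕ) = dfun binv lam (m:ℕ) * (-(lam (k:ℕ) * binv (k:ℕ))) := by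
            rw [← h2, dfun_succ]
          rw [this]
          ring
        · exact Dvd.dvd.mul_left ((dfun_dvd binv lam (by omega)).trans (ih m)) _
end Conc
def sfun (binv lam : ℕ → R) : ℕ → R :=
  fun h => (-1)^h * (∏ t ∈ Finset.Icc 1 h, lam t) * (∏ t ∈ Finset.range h, binv t)

lemma sfun_zero (binv lam : ℕ → R) : sfun binv lam 0 = 1 := by
  unfold sfun
  rw [Finset.Icc_eq_empty (by omega), Finset.prod_empty, Finset.range_zero, Finset.prod_empty,
    pow_zero]
  ring

section Conc2
variable {N : ℕ} (b binv lam : ℕ → R) (hbb : ∀ t, b t * binv t = 1)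
include hbb

lemma id1 (h k : ℕ) (hhk : h ≤ k) :
    (-1)^(k-h) * (∏ t ∈ Finset.Icc h k, b t) * sfun binv lam k
      = sfun binv lam h * (b k * ∏ t ∈ Finset.Icc (h+1) k, lam t) := by
  unfold sfun
  have f1 : ((-1:R))^(k-h) * (-1)^k = (-1)^h := by
    rw [← pow_add, show k-h+k = 2*(k-h)+h by omega, pow_add, pow_mul, neg_one_sq, one_pow,
      one_mul]
  have f2 : (∏ t ∈ Finset.Icc 1 k, lam t)
      = (∏ t ∈ Finset.Icc 1 h, lam t) * ∏ t ∈ Finset.Icc (h+1) k, lam t :=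
    Icc_prod_split lam h k hhk
  have f3 : (∏ t ∈ Finset.Icc h k, b t) * (∏ t ∈ Finset.range k, binv t)
      = (∏ t ∈ Finset.range h, binv t) * b k := by
    rw [Icc_prod_top b h k hhk, range_prod_split binv h k hhk]
    have hone : (∏ t ∈ Finset.Ico h k, b t) * (∏ t ∈ Finset.Ico h k, binv t) = 1 := by
      rw [← Finset.prod_mul_distrib, Finset.prod_congr rfl (fun t _ => hbb t)]
      exact Finset.prod_const_one
    calc (∏ t ∈ Finset.Ico h k, b t) * b k
          * ((∏ t ∈ Finset.range h, binv t) * ∏ t ∈ Finset.Ico h k, binv t)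
        = ((∏ t ∈ Finset.Ico h k, b t) * (∏ t ∈ Finset.Ico h k, binv t))
          * ((∏ t ∈ Finset.range h, binv t) * b k) := by ring
      _ = _ := by rw [hone, one_mul]
  calc (-1)^(k-h) * (∏ t ∈ Finset.Icc h k, b t)
        * ((-1)^k * (∏ t ∈ Finset.Icc 1 k, lam t) * (∏ t ∈ Finset.range k, binv t))
      = ((-1)^(k-h) * (-1)^k) * (∏ t ∈ Finset.Icc 1 k, lam t)
        * ((∏ t ∈ Finset.Icc h k, b t) * (∏ t ∈ Finset.range k, binv t)) := by ring
    _ = (-1)^h * ((∏ t ∈ Finset.Icc 1 h, lam t) * ∏ t ∈ Finset.Icc (h+1) k, lam t)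
        * ((∏ t ∈ Finset.range h, binv t) * b k) := by rw [f1, f2, f3]
    _ = _ := by ring

lemma id2 (h k : ℕ) (hhk : h ≤ k) :
    -((-1)^(k+1-h) * (∏ t ∈ Finset.Icc h (k+1), b t) * (lam (k+1) * binv k * binv (k+1)))
        * sfun binv lam k
      = sfun binv lam h * ∏ t ∈ Finset.Icc (h+1) (k+1), lam t := by
  have f4 : -((-1:R)^(k+1-h)) = (-1)^(k-h) := by
    rw [show k+1-h = (k-h)+1 by omega, pow_succ]
    ring
  have f5 : ∏ t ∈ Finset.Icc (h+1) (k+1), lam t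
      = (∏ t ∈ Finset.Icc (h+1) k, lam t) * lam (k+1) :=
    Icc_prod_succ_top lam (h+1) k (by omega)
  have f6 : ∏ t ∈ Finset.Icc h (k+1), b t = (∏ t ∈ Finset.Icc h k, b t) * b (k+1) :=
    Icc_prod_succ_top b h k (by omega)
  calc -((-1)^(k+1-h) * (∏ t ∈ Finset.Icc h (k+1), b t) * (lam (k+1) * binv k * binv (k+1)))
        * sfun binv lam k
      = ((-((-1:R))^(k+1-h)) * (∏ t ∈ Finset.Icc h k, b t) * sfun binv lam k)
        * (lam (k+1) * binv k) * (b (k+1) * binv (k+1)) := by rw [f6]; ring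
    _ = ((-1)^(k-h) * (∏ t ∈ Finset.Icc h k, b t) * sfun binv lam k)
        * (lam (k+1) * binv k) * 1 := by rw [f4, hbb (k+1)]
    _ = (sfun binv lam h * (b k * ∏ t ∈ Finset.Icc (h+1) k, lam t))
        * (lam (k+1) * binv k) * 1 := by rw [id1 b binv lam hbb h k hhk]
    _ = sfun binv lam h * ((∏ t ∈ Finset.Icc (h+1) k, lam t) * lam (k+1)) * (b k * binv k) := by
        ring
    _ = sfun binv lam h * ((∏ t ∈ Finset.Icc (h+1) k, lam t) * lam (k+1)) * 1 := by rw [hbb k]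
    _ = _ := by rw [← f5]; ring

lemma conj :
    (Yinv N b * Zinv N (dwnP binv lam)) * Matrix.diagonal (fun x : Fin N => sfun binv lam x)
      = Matrix.diagonal (fun x : Fin N => sfun binv lam x) * (Tmat N b lam)ᵀ := by
  ext h k
  rw [Matrix.mul_diagonal, Matrix.diagonal_mul, Matrix.transpose_apply]
  rw [mul_Zinv_apply, T_apply]
  rcases lt_trichotomy ((k:ℕ)+1) (h:ℕ) with hcase | hcase | hcase
  · rw [Yinv_apply_gt b h k (by omega), Z_apply_gt lam k h (by omega)]
    have hz1 : ∀ hc : (k:ℕ)+1 < N,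
        Yinv N b h ⟨(k:ℕ)+1, hc⟩ * dwnP binv lam ((k:ℕ)+1) = 0 := fun hc => by
      rw [Yinv_apply_gt b h ⟨(k:ℕ)+1, hc⟩ (by simp only [Fin.val_mk]; omega), zero_mul]
    have hz2 : ∀ hc : (k:ℕ)+1 < N, Zmat N lam ⟨(k:ℕ)+1, hc⟩ h = 0 := fun hc => by
      rw [Z_apply_gt lam ⟨(k:ℕ)+1, hc⟩ h (by simp only [Fin.val_mk]; omega)]
    by_cases hc : (k:ℕ)+1 < N
    · rw [dif_pos hc, dif_pos hc, hz1 hc, hz2 hc]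
      ring
    · rw [dif_neg hc, dif_neg hc]
      ring
  · have hc : (k:ℕ)+1 < N := hcase ▸ h.isLt
    rw [dif_pos hc, dif_pos hc, Yinv_apply_gt b h k (by omega), Z_apply_gt lam k h (by omega)]
    have hy : Yinv N b h ⟨(k:ℕ)+1, hc⟩ = b (h:ℕ) := by
      rw [Yinv_apply_le b h ⟨(k:ℕ)+1, hc⟩ (by simp only [Fin.val_mk]; omega)]
      simp only [Fin.val_mk, hcase]
      rw [Nat.sub_self, pow_zero, one_mul, Finset.Icc_self, Finset.prod_singleton]
    have hzz : Zmat N lam ⟨(k:ℕ)+1, hc⟩ h = 1 := by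
      rw [Z_apply_le lam ⟨(k:ℕ)+1, hc⟩ h (by simp only [Fin.val_mk]; omega)]
      rw [Finset.Icc_eq_empty (by simp only [Fin.val_mk]; omega), Finset.prod_empty]
    rw [hy, hzz]
    have key : -(lam (h:ℕ) * binv (k:ℕ)) * sfun binv lam (k:ℕ) = sfun binv lam (h:ℕ) := by
      unfold sfun
      rw [← hcase, Icc_prod_succ_top lam 1 (k:ℕ) (by omega), Finset.prod_range_succ, pow_succ]
      ring
    have hdwn : dwnP binv lam ((k:ℕ)+1) = lam (h:ℕ) * binv (k:ℕ) * binv (h:ℕ) := by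
      unfold dwnP
      rw [Nat.add_sub_cancel, hcase]
    calc (0 - b (h:ℕ) * dwnP binv lam ((k:ℕ)+1)) * sfun binv lam (k:ℕ)
        = (b (h:ℕ) * binv (h:ℕ)) * (-(lam (h:ℕ) * binv (k:ℕ)) * sfun binv lam (k:ℕ)) := by
          rw [hdwn]; ring
      _ = sfun binv lam (h:ℕ) := by rw [hbb (h:ℕ), key, one_mul]
      _ = sfun binv lam (h:ℕ) * (b (k:ℕ) * 0 + 1) := by ring
  · have hhk : (h:ℕ) ≤ (k:ℕ) := by omega
    rw [Yinv_apply_le b h k hhk, Z_apply_le lam k h hhk]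
    have hdwn : dwnP binv lam ((k:ℕ)+1) = lam ((k:ℕ)+1) * binv (k:ℕ) * binv ((k:ℕ)+1) := by
      unfold dwnP
      rw [Nat.add_sub_cancel]
    by_cases hc : (k:ℕ)+1 < N
    · rw [dif_pos hc, dif_pos hc]
      have hy : Yinv N b h ⟨(k:ℕ)+1, hc⟩
          = (-1)^((k:ℕ)+1-(h:ℕ)) * ∏ t ∈ Finset.Icc (h:ℕ) ((k:ℕ)+1), b t := by
        rw [Yinv_apply_le b h ⟨(k:ℕ)+1, hc⟩ (by simp only [Fin.val_mk]; omega)]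
      have hz : Zmat N lam ⟨(k:ℕ)+1, hc⟩ h
          = ∏ t ∈ Finset.Icc ((h:ℕ)+1) ((k:ℕ)+1), lam t := by
        rw [Z_apply_le lam ⟨(k:ℕ)+1, hc⟩ h (by simp only [Fin.val_mk]; omega)]
      rw [hy, hz, hdwn]
      have e1 := id1 b binv lam hbb (h:ℕ) (k:ℕ) hhk
      have e2 := id2 b binv lam hbb (h:ℕ) (k:ℕ) hhk
      linear_combination e1 + e2
    · rw [dif_neg hc, dif_neg hc]
      have e1 := id1 b binv lam hbb (h:ℕ) (k:ℕ) hhk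
      linear_combination e1

lemma X_pow_diag_comm : ∀ r : ℕ,
    (Yinv N b * Zinv N (dwnP binv lam))^r * Matrix.diagonal (fun x : Fin N => sfun binv lam x)
      = Matrix.diagonal (fun x : Fin N => sfun binv lam x) * ((Tmat N b lam)ᵀ)^r := by
  intro r
  induction r with
  | zero => rw [pow_zero, pow_zero, Matrix.one_mul, Matrix.mul_one]
  | succ r ih =>
      rw [pow_succ, pow_succ, Matrix.mul_assoc, conj b binv lam hbb, ← Matrix.mul_assoc, ih,
        Matrix.mul_assoc]

lemma X_pow_00 [NeZero N] (r : ℕ) :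
    ((Yinv N b * Zinv N (dwnP binv lam))^r) (0 : Fin N) 0 = ((Tmat N b lam)^r) 0 0 := by
  have hent : ((Yinv N b * Zinv N (dwnP binv lam))^r
        * Matrix.diagonal (fun x : Fin N => sfun binv lam x)) 0 0
      = (Matrix.diagonal (fun x : Fin N => sfun binv lam x) * ((Tmat N b lam)ᵀ)^r) 0 0 := by
    rw [X_pow_diag_comm b binv lam hbb r]
  rw [Matrix.mul_diagonal, Matrix.diagonal_mul] at hent
  have h0 : sfun binv lam ((0 : Fin N) : ℕ) = 1 := by
    have : ((0 : Fin N) : ℕ) = 0 := rfl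
    rw [this, sfun_zero binv lam]
  rw [h0, mul_one, one_mul, ← Matrix.transpose_pow, Matrix.transpose_apply] at hent
  exact hent

lemma K_pow_decomp : ∀ m : ℕ, Kmat N (dwnP binv lam) b ^ (m+1)
    = Zinv N (dwnP binv lam) * (Yinv N b * Zinv N (dwnP binv lam))^m * Yinv N b := by
  intro m
  induction m with
  | zero =>
      rw [pow_one, pow_zero, Matrix.mul_one]
      rfl
  | succ m ih =>
      rw [pow_succ, ih]
      show _ = Zinv N (dwnP binv lam) * (Yinv N b * Zinv N (dwnP binv lam))^(m+1) * Yinv N b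
      rw [pow_succ]
      unfold Kmat
      simp only [Matrix.mul_assoc]

lemma K_pow_00 [NeZero N] (m : ℕ) :
    (Kmat N (dwnP binv lam) b ^ (m+1)) (0 : Fin N) 0 = b 0 * ((Tmat N b lam)^m) 0 0 := by
  rw [K_pow_decomp b binv lam hbb m, Matrix.mul_assoc, Zinv_mul_apply, dif_neg (by
    show ¬ (1 ≤ ((0 : Fin N) : ℕ)); simp)]
  rw [add_zero, Matrix.mul_apply]
  have hsplit : ∀ j : Fin N, ((Yinv N b * Zinv N (dwnP binv lam))^m) (0 : Fin N) j
        * Yinv N b j (0 : Fin N)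
      = (if (j:ℕ) = 0 then ((Yinv N b * Zinv N (dwnP binv lam))^m) (0 : Fin N) j * b 0 else 0)
      := by
    intro j
    by_cases hj : (j:ℕ) = 0
    · rw [if_pos hj]
      have hj' : j = (0 : Fin N) := Fin.ext hj
      subst hj'
      congr 1
      rw [Yinv_apply_le b _ _ (le_refl _)]
      show (-1:R)^(((0:Fin N):ℕ) - ((0:Fin N):ℕ)) * ∏ t ∈ Finset.Icc ((0:Fin N):ℕ) ((0:Fin N):ℕ), b t = b 0
      have : ((0 : Fin N) : ℕ) = 0 := rfl
      rw [this, Nat.sub_self, pow_zero, one_mul, Finset.Icc_self, Finset.prod_singleton]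
    · rw [if_neg hj, Yinv_apply_gt b j (0 : Fin N) (by
        have h00 : ((0 : Fin N) : ℕ) = 0 := rfl
        omega), mul_zero]
  rw [Finset.sum_congr rfl (fun j _ => hsplit j),
    sum_fin_single (fun j => ((Yinv N b * Zinv N (dwnP binv lam))^m) (0 : Fin N) j * b 0) 0,
    dif_pos (Nat.pos_of_ne_zero (NeZero.ne N))]
  have e0 : (⟨0, Nat.pos_of_ne_zero (NeZero.ne N)⟩ : Fin N) = 0 := rfl
  rw [e0, X_pow_00 b binv lam hbb m]
  ring

end Conc2


section Final
variable {R : Type*} [CommRing R]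

lemma moment_pos_eq {N : ℕ} [NeZero N] (lev dwn : ℕ → R) (m : ℕ) (hm : m < N) :
    G' lev dwn m 0 = (Tmat N lev dwn ^ m) 0 0 := by
  have hN : 0 < N := Nat.pos_of_ne_zero (NeZero.ne N)
  have huniq := unique_rec lev dwn (N-1)
    (fun m h => G' lev dwn m h) (fun m h => valg (Tmat N lev dwn) m h)
    (fun h => by show G' lev dwn 0 h = valg (Tmat N lev dwn) 0 h; rw [G'_zero, valg_zero])
    (fun m h _ => G'_succ lev dwn m h)
    (fun m h hm1 => valg_rec lev dwn m (by omega) h)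
    (fun m h hmh => G'_vanish lev dwn hmh)
    (fun m h hmh => valg_vanish lev dwn m h hmh)
  have hfin : G' lev dwn m 0 = valg (Tmat N lev dwn) m 0 := huniq m (by omega) 0
  rw [hfin]
  unfold valg
  rw [dif_pos hN]
  congr 1

lemma mul_pow_cancel₁ {N : ℕ} (J K : Matrix (Fin N) (Fin N) R) (hJK : J * K = 1) :
    ∀ c a : ℕ, J^(a+c) * K^c = J^a := by
  intro c
  induction c with
  | zero => intro a; rw [pow_zero, Matrix.mul_one, Nat.add_zero]
  | succ c ih =>
      intro a
      rw [show a + (c+1) = (a+c)+1 by omega, pow_succ, pow_succ']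
      calc J^(a+c) * J * (K * K^c) = J^(a+c) * ((J * K) * K^c) := by
            simp only [Matrix.mul_assoc]
        _ = J^(a+c) * K^c := by rw [hJK, Matrix.one_mul]
        _ = J^a := ih a

lemma mul_pow_cancel₂ {N : ℕ} (J K : Matrix (Fin N) (Fin N) R) (hJK : J * K = 1) (c a : ℕ) :
    J^c * K^(c+a) = K^a := by
  rw [pow_add, ← Matrix.mul_assoc]
  have := mul_pow_cancel₁ J K hJK c 0
  rw [Nat.zero_add] at this
  rw [this, pow_zero, Matrix.one_mul]

end Final

end TSSNF

/-- Over the Laurent polynomial ring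
`R = ℤ[b₀^{±1}, b₁^{±1}, …, λ₁, λ₂, …]`, realized as the monoid algebra of `ℕ →₀ ℤ`
(Laurent monomials in the `b`'s) over `ℤ[λ] = MvPolynomial ℕ+ ℤ`, the Toeplitz matrix
`(μ_{i-j})_{0≤i,j≤n}` has SSNF
`diag(1, -λ₁/b₁, λ₁λ₂/(b₁b₂), …, (-1)ⁿ λ₁⋯λ_n/(b₁⋯b_n))`. -/
theorem toeplitz_schroder_SSNF (n : ℕ) :
    let R := AddMonoidAlgebra (MvPolynomial ℕ+ ℤ) (ℕ →₀ ℤ)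
    let b : ℕ → R := fun i => AddMonoidAlgebra.single (Finsupp.single i (1 : ℤ)) 1
    let binv : ℕ → R := fun i => AddMonoidAlgebra.single (Finsupp.single i (-1 : ℤ)) 1
    let lam : ℕ → R := fun i =>
      AddMonoidAlgebra.single 0
        (if h : 0 < i then MvPolynomial.X (⟨i, h⟩ : ℕ+) else 0)
    HasSSNF (fun i j : Fin (n+1) => schroderMoment b binv lam ((i : ℕ) - (j : ℕ) : ℤ))
      (fun i => (-1) ^ (i : ℕ) * (∏ t ∈ Finset.Icc 1 (i : ℕ), lam t) *
        (∏ t ∈ Finset.Icc 1 (i : ℕ), binv t)) := by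
  intro R b binv lam
  classical
  have hbb : ∀ t, b t * binv t = 1 := by
    intro t
    show AddMonoidAlgebra.single _ _ * AddMonoidAlgebra.single _ _ = 1
    rw [AddMonoidAlgebra.single_mul_single, one_mul, ← Finsupp.single_add, add_neg_cancel,
      Finsupp.single_zero]
    rfl
  set N := n + 1 with hN
  set J := TSSNF.Tmat N binv (TSSNF.dwnP binv lam) with hJdef
  set K := TSSNF.Kmat N (TSSNF.dwnP binv lam) b with hKdef
  have hJK : J * K = 1 := TSSNF.J_mul_K b binv lam hbb
  set dvec : Fin N → R := fun i => (-1) ^ (i : ℕ) * (∏ t ∈ Finset.Icc 1 (i : ℕ), lam t) *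
      (∏ t ∈ Finset.Icc 1 (i : ℕ), binv t) with hdvec
  have hdfun : ∀ i : Fin N, dvec i = TSSNF.dfun binv lam (i : ℕ) := fun i => rfl
  -- moment identifications
  have hpos : ∀ m : ℕ, m < N → schroderMomentPos binv lam m = (J ^ m) 0 0 := by
    intro m hm
    have hb1 : schroderMomentPos binv lam m
        = TSSNF.G' binv (TSSNF.dwnP binv lam) m 0 := rfl
    rw [hb1, TSSNF.moment_pos_eq binv (TSSNF.dwnP binv lam) m hm]
  have hneg : ∀ m : ℕ, m < N → schroderMomentNeg b lam (m+1) = (K ^ (m+1)) 0 0 := by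
    intro m hm
    have hb2 : schroderMomentNeg b lam (m+1) = b 0 * TSSNF.G' b lam m 0 :=
      TSSNF.neg_side b lam m
    rw [hb2, TSSNF.moment_pos_eq b lam m hm, ← TSSNF.K_pow_00 b binv lam hbb m]
  -- the triangular factors
  set U : Matrix (Fin N) (Fin N) R := Matrix.of fun i k => (J ^ (i:ℕ)) 0 k with hU
  set W : Matrix (Fin N) (Fin N) R := Matrix.of fun k j => (K ^ (j:ℕ)) k 0 with hW
  have hU_tri : ∀ i k : Fin N, (i:ℕ) < (k:ℕ) → U i k = 0 := by
    intro i k hik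
    show (J ^ (i:ℕ)) 0 k = 0
    exact TSSNF.T_pow_upper binv (TSSNF.dwnP binv lam) (i:ℕ) k hik
  have hU_diag : ∀ i : Fin N, U i i = 1 := by
    intro i
    show (J ^ (i:ℕ)) 0 i = 1
    have := TSSNF.T_pow_diag binv (TSSNF.dwnP binv lam) (i:ℕ) i.isLt
    rwa [Fin.eta] at this
  have hW_lower : ∀ k j : Fin N, (j:ℕ) < (k:ℕ) → W k j = 0 := by
    intro k j hjk
    show (K ^ (j:ℕ)) k 0 = 0
    exact TSSNF.K_pow_lower b binv lam hbb (j:ℕ) k hjk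
  have hW_diag : ∀ j : Fin N, W j j = dvec j := by
    intro j
    show (K ^ (j:ℕ)) j 0 = dvec j
    have := TSSNF.K_pow_diag b binv lam hbb (j:ℕ) j.isLt
    rw [Fin.eta] at this
    rw [this, hdfun]
  have hW_dvd : ∀ k j : Fin N, dvec k ∣ W k j := by
    intro k j
    rw [hdfun]
    exact TSSNF.K_pow_dvd b binv lam hbb (j:ℕ) k
  -- Toeplitz = U * W
  have hM : (fun i j : Fin N => schroderMoment b binv lam ((i : ℕ) - (j : ℕ) : ℤ)) = U * W := by
    funext i j
    show schroderMoment b binv lam ((i : ℕ) - (j : ℕ) : ℤ) = (U * W) i j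
    have hentry : (U * W) i j = (J ^ (i:ℕ) * K ^ (j:ℕ)) 0 0 := by
      rw [Matrix.mul_apply, Matrix.mul_apply]
      rfl
    rw [hentry]
    rcases le_or_gt (j:ℕ) (i:ℕ) with hij | hij
    · have hcan : J ^ (i:ℕ) * K ^ (j:ℕ) = J ^ ((i:ℕ) - (j:ℕ)) := by
        have := TSSNF.mul_pow_cancel₁ J K hJK (j:ℕ) ((i:ℕ) - (j:ℕ))
        rwa [show (i:ℕ) - (j:ℕ) + (j:ℕ) = (i:ℕ) by omega] at this
      rw [hcan]
      unfold schroderMoment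
      rw [if_pos (by omega : (0:ℤ) ≤ ((i:ℕ):ℤ) - ((j:ℕ):ℤ))]
      rw [show (((i:ℕ):ℤ) - ((j:ℕ):ℤ)).toNat = (i:ℕ) - (j:ℕ) by omega]
      exact hpos ((i:ℕ) - (j:ℕ)) (by omega)
    · have hcan : J ^ (i:ℕ) * K ^ (j:ℕ) = K ^ ((j:ℕ) - (i:ℕ)) := by
        have := TSSNF.mul_pow_cancel₂ J K hJK (i:ℕ) ((j:ℕ) - (i:ℕ))
        rwa [show (i:ℕ) + ((j:ℕ) - (i:ℕ)) = (j:ℕ) by omega] at this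
      rw [hcan]
      unfold schroderMoment
      rw [if_neg (by omega : ¬ (0:ℤ) ≤ ((i:ℕ):ℤ) - ((j:ℕ):ℤ))]
      rw [show (-(((i:ℕ):ℤ) - ((j:ℕ):ℤ))).toNat = (j:ℕ) - (i:ℕ) by omega]
      have hsplit : (j:ℕ) - (i:ℕ) = ((j:ℕ) - (i:ℕ) - 1) + 1 := by omega
      rw [hsplit]
      exact hneg ((j:ℕ) - (i:ℕ) - 1) (by omega)
  -- factor W through the diagonal
  have hW_ex : ∀ k j : Fin N, ∃ c, W k j = dvec k * c := fun k j => hW_dvd k j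
  set Nm : Matrix (Fin N) (Fin N) R := Matrix.of fun k j =>
    if (k:ℕ) < (j:ℕ) then (hW_ex k j).choose else if k = j then 1 else 0 with hNm
  have hWfact : W = Matrix.diagonal dvec * Nm := by
    funext k j
    show W k j = (Matrix.diagonal dvec * Nm) k j
    rw [Matrix.diagonal_mul]
    show W k j = dvec k * (if (k:ℕ) < (j:ℕ) then (hW_ex k j).choose else if k = j then 1 else 0)
    rcases lt_trichotomy ((k:ℕ)) ((j:ℕ)) with hkj | hkj | hkj
    · rw [if_pos hkj]
      exact (hW_ex k j).choose_spec
    · have : k = j := Fin.ext hkj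
      subst this
      rw [if_neg (by omega), if_pos rfl, mul_one, hW_diag]
    · rw [if_neg (by omega), if_neg (fun hx => by rw [hx] at hkj; omega), mul_zero]
      exact hW_lower k j hkj
  -- determinants
  have hdetU : U.det = 1 := by
    rw [Matrix.det_of_lowerTriangular U (by
      intro i j hij
      exact hU_tri i j (OrderDual.toDual_lt_toDual.mp hij))]
    rw [Finset.prod_congr rfl (fun i _ => hU_diag i)]
    exact Finset.prod_const_one
  have hdetNm : Nm.det = 1 := by
    rw [Matrix.det_of_upperTriangular (by
      intro i j hij
      have hij' : (j:ℕ) < (i:ℕ) := hij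
      show (if (i:ℕ) < (j:ℕ) then _ else if i = j then _ else (0:R)) = 0
      rw [if_neg (by omega), if_neg (by
        intro hx
        rw [hx] at hij'
        omega)])]
    have hd : ∀ i : Fin N, Nm i i = 1 := by
      intro i
      show (if (i:ℕ) < (i:ℕ) then _ else if i = i then _ else (0:R)) = 1
      rw [if_neg (lt_irrefl _), if_pos rfl]
    rw [Finset.prod_congr rfl (fun i _ => hd i)]
    exact Finset.prod_const_one
  have hUU : IsUnit U.det := by rw [hdetU]; exact isUnit_one
  have hNN : IsUnit Nm.det := by rw [hdetNm]; exact isUnit_one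
  constructor
  · refine ⟨U⁻¹, Nm⁻¹, ?_, ?_, ?_⟩
    · rw [Matrix.det_nonsing_inv, hdetU, Ring.inverse_one]
    · rw [Matrix.det_nonsing_inv, hdetNm, Ring.inverse_one]
    · rw [hM, hWfact]
      calc U⁻¹ * (U * (Matrix.diagonal dvec * Nm)) * Nm⁻¹
          = (U⁻¹ * U) * (Matrix.diagonal dvec * (Nm * Nm⁻¹)) := by
            simp only [Matrix.mul_assoc]
        _ = Matrix.diagonal dvec := by
            rw [Matrix.nonsing_inv_mul U hUU, Matrix.mul_nonsing_inv Nm hNN,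
              Matrix.one_mul, Matrix.mul_one]
  · intro i j hji
    have h1 : ((j:ℕ)) ≤ ((i:ℕ)) := hji
    show dvec j ∣ dvec i
    rw [hdfun, hdfun]
    exact TSSNF.dfun_dvd binv lam h1
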